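/- arXiv:1802.01242 — 5 statements merged into one kernel-verified Lean document; each statement's English description precedes it below -/
import Mathlib

section
/- There is an absolute constant C > 0 with the following property. Let G = (V,E) be a finite undirected graph with n = |V| ≥ 2 vertices, let c : E → ℝ≥0 be edge costs, let ε ∈ (0,1), and let x : E → ℝ be feasible for the 2ECSS LP on G. Then there exists a vector y : E → ℝ that is feasible for the 2ECSS LP on G such that the support of y is contained in the support of x, the support of y has at most C · n · (log n) / ε² edges, and Σ_{e∈E} c_e y_e ≤ (1+ε) · Σ_{e∈E} c_e x_e. -/
open scoped Classical

noncomputable section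

variable {V : Type*} [Fintype V] [DecidableEq V]

/-- Cut value of `S`: the sum of `x` over edges of `G` with exactly one endpoint in `S`. -/
def cutSum (G : SimpleGraph V) (x : Sym2 V → ℝ) (S : Set V) : ℝ :=
  ∑ e : Sym2 V, if e ∈ G.edgeSet ∧ ∃ u v, e = s(u, v) ∧ u ∈ S ∧ v ∉ S then x e else 0

/-- `x` is feasible for the 2ECSS LP on `G`: nonnegative on edges, and every
nonempty proper cut has value at least `2`. -/
def Feas2ECSS (G : SimpleGraph V) (x : Sym2 V → ℝ) : Prop :=
  (∀ e ∈ G.edgeSet, 0 ≤ x e) ∧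
    ∀ S : Set V, S.Nonempty → S ≠ Set.univ → 2 ≤ cutSum G x S

/-- Cost `∑_{e ∈ E} c_e x_e` of a vector `x` with respect to edge costs `c`. -/
def lpCost (G : SimpleGraph V) (c x : Sym2 V → ℝ) : ℝ :=
  ∑ e : Sym2 V, if e ∈ G.edgeSet then c e * x e else 0

/-- The support of `x`: edges of `G` where `x` is nonzero. -/
def lpSupport (G : SimpleGraph V) (x : Sym2 V → ℝ) : Finset (Sym2 V) :=
  Finset.univ.filter fun e => e ∈ G.edgeSet ∧ x e ≠ 0

set_option linter.unusedSectionVars false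
set_option maxHeartbeats 1000000

abbrev Euc (ι : Type*) [Fintype ι] := EuclideanSpace ℝ ι

def dp {ι : Type*} [Fintype ι] (v w : Euc ι) : ℝ := inner ℝ v w

lemma dp_eq_sum {ι : Type*} [Fintype ι] (v w : Euc ι) : dp v w = ∑ i, v i * w i := by
  simp [dp, PiLp.inner_apply, RCLike.inner_apply, mul_comm]

lemma dp_add_right {ι : Type*} [Fintype ι] (a y z : Euc ι) :
    dp a (y + z) = dp a y + dp a z := by simp [dp, inner_add_right]

lemma dp_smul_right {ι : Type*} [Fintype ι] (a y : Euc ι) (t : ℝ) :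
    dp a (t • y) = t * dp a y := by simp [dp, inner_smul_right]

lemma dp_neg_left {ι : Type*} [Fintype ι] (a y : Euc ι) : dp (-a) y = -dp a y := by
  simp [dp, inner_neg_left]

lemma dp_zero_left {ι : Type*} [Fintype ι] (y : Euc ι) : dp 0 y = 0 := by
  simp [dp]

def deltaV {ι : Type*} [Fintype ι] (i₀ : ι) : Euc ι := WithLp.toLp 2 (fun i => if i = i₀ then (1:ℝ) else 0)

lemma dp_deltaV {ι : Type*} [Fintype ι] (i₀ : ι) (y : Euc ι) : dp (deltaV i₀) y = y i₀ := by
  rw [dp_eq_sum]; simp [deltaV, ite_mul]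

def onesV {ι : Type*} [Fintype ι] : Euc ι := WithLp.toLp 2 (fun _ => (1:ℝ))

lemma dp_onesV {ι : Type*} [Fintype ι] (y : Euc ι) : dp onesV y = ∑ i, y i := by
  rw [dp_eq_sum]; simp [onesV]

lemma mem_span_deltaV {ι : Type*} [Fintype ι] (v : Euc ι) (Z : Finset ι)
    (h : ∀ i, v i ≠ 0 → i ∈ Z) :
    v ∈ Submodule.span ℝ (deltaV '' (Z : Set ι)) := by
  have hv : v = ∑ i ∈ Z, v i • deltaV i := by
    ext j
    rw [WithLp.ofLp_sum, Finset.sum_apply]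
    by_cases hj : j ∈ Z
    · rw [Finset.sum_eq_single j]
      · simp [deltaV]
      · intro i _ hij
        simp [deltaV, Ne.symm hij, hij]
      · intro hjj; exact absurd hj hjj
    · have : v j = 0 := by
        by_contra hne
        exact hj (h j hne)
      rw [this]
      symm
      apply Finset.sum_eq_zero
      intro i hi
      have : j ≠ i := fun hh => hj (hh ▸ hi)
      simp [deltaV, this]
  rw [hv]
  apply Submodule.sum_mem
  intro i hi
  exact Submodule.smul_mem _ _ (Submodule.subset_span ⟨i, by simpa using hi, rfl⟩)

variable {V : Type*} [Fintype V] [DecidableEq V]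

lemma sym2_exists_pair {u v : V} {P : V → V → Prop} :
    (∃ a b, s(u, v) = s(a, b) ∧ P a b) ↔ P u v ∨ P v u := by
  constructor
  · rintro ⟨a, b, hab, h⟩
    rw [Sym2.eq_iff] at hab
    rcases hab with ⟨h1, h2⟩ | ⟨h1, h2⟩
    · left; rw [h1, h2]; exact h
    · right; rw [h1, h2]; exact h
  · rintro (h | h)
    · exact ⟨u, v, rfl, h⟩
    · exact ⟨v, u, Sym2.eq_swap, h⟩

def CrossF (S R : Finset V) : Prop := ¬S ⊆ R ∧ ¬R ⊆ S ∧ (S ∩ R).Nonempty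

section Graph
variable (G : SimpleGraph V)

def crossE (S : Finset V) (e : Sym2 V) : Prop :=
  e ∈ G.edgeSet ∧ ∃ u w, e = s(u, w) ∧ u ∈ S ∧ w ∉ S

def aVec (S : Finset V) : Euc (Sym2 V) := WithLp.toLp 2 (fun e => if crossE G S e then (1:ℝ) else 0)

lemma aVec_nonneg (S : Finset V) (e : Sym2 V) : 0 ≤ aVec G S e := by
  unfold aVec; simp only [WithLp.ofLp_toLp]; split <;> norm_num

lemma dp_aVec (S : Finset V) (y : Euc (Sym2 V)) :
    dp (aVec G S) y = ∑ e, if crossE G S e then y e else 0 := by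
  rw [dp_eq_sum]
  apply Finset.sum_congr rfl
  intro e _
  by_cases h : crossE G S e <;> simp [aVec, h]

lemma crossE_pair (S : Finset V) (u w : V) :
    crossE G S s(u, w) ↔ s(u, w) ∈ G.edgeSet ∧ ((u ∈ S ∧ w ∉ S) ∨ (w ∈ S ∧ u ∉ S)) := by
  unfold crossE
  rw [sym2_exists_pair]

lemma aVec_compl (S : Finset V) : aVec G (Finset.univ \ S) = aVec G S := by
  ext e
  unfold aVec crossE
  simp only [WithLp.ofLp_toLp]
  congr 1
  induction e using Sym2.inductionOn with
  | _ u w =>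
    rw [eq_iff_iff]
    constructor
    · rintro ⟨he, h⟩
      rw [sym2_exists_pair] at h
      refine ⟨he, ?_⟩
      rw [sym2_exists_pair]
      simp only [Finset.mem_sdiff, Finset.mem_univ, true_and, not_not] at h
      rcases h with ⟨h1, h2⟩ | ⟨h1, h2⟩
      · right; exact ⟨by simpa using h2, by simpa using h1⟩
      · left; exact ⟨by simpa using h2, by simpa using h1⟩
    · rintro ⟨he, h⟩
      rw [sym2_exists_pair] at h
      refine ⟨he, ?_⟩
      rw [sym2_exists_pair]
      simp only [Finset.mem_sdiff, Finset.mem_univ, true_and, not_not]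
      tauto

def crxV (S R : Finset V) : Euc (Sym2 V) := WithLp.toLp 2 (fun e =>
  if e ∈ G.edgeSet ∧ ∃ u w, e = s(u, w) ∧
      ((u ∈ S ∧ u ∉ R ∧ w ∈ R ∧ w ∉ S) ∨ (w ∈ S ∧ w ∉ R ∧ u ∈ R ∧ u ∉ S)) then (1:ℝ) else 0)

lemma crxV_nonneg (S R : Finset V) (e : Sym2 V) : 0 ≤ crxV G S R e := by
  unfold crxV; simp only [WithLp.ofLp_toLp]; split <;> norm_num

lemma aVec_uncross (S R : Finset V) (e : Sym2 V) :
    aVec G S e + aVec G R e =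
      aVec G (S ∩ R) e + aVec G (S ∪ R) e + 2 * crxV G S R e := by
  induction e using Sym2.inductionOn with
  | _ u w =>
    unfold aVec crxV
    by_cases he : s(u, w) ∈ G.edgeSet
    · have hcr : ∀ S' : Finset V, crossE G S' s(u,w) ↔
          (s(u,w) ∈ G.edgeSet ∧ ((u ∈ S' ∧ w ∉ S') ∨ (w ∈ S' ∧ u ∉ S'))) :=
        fun S' => crossE_pair G S' u w
      have hcx : (∃ a b, s(u,w) = s(a, b) ∧
          ((a ∈ S ∧ a ∉ R ∧ b ∈ R ∧ b ∉ S) ∨ (b ∈ S ∧ b ∉ R ∧ a ∈ R ∧ a ∉ S))) ↔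
          ((u ∈ S ∧ u ∉ R ∧ w ∈ R ∧ w ∉ S) ∨ (w ∈ S ∧ w ∉ R ∧ u ∈ R ∧ u ∉ S)) := by
        rw [sym2_exists_pair]; tauto
      simp only [hcr, hcx]
      by_cases h1 : u ∈ S <;> by_cases h2 : w ∈ S <;>
        by_cases h3 : u ∈ R <;> by_cases h4 : w ∈ R <;>
        simp [he, h1, h2, h3, h4, Finset.mem_inter, Finset.mem_union] <;> norm_num
    · have hf : ∀ S' : Finset V, ¬ crossE G S' s(u,w) := fun S' hc => he hc.1
      simp [hf, he]

lemma dp_uncross (S R : Finset V) (y : Euc (Sym2 V)) :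
    dp (aVec G S) y + dp (aVec G R) y =
      dp (aVec G (S ∩ R)) y + dp (aVec G (S ∪ R)) y + 2 * dp (crxV G S R) y := by
  have key : ∀ e, aVec G S e * y e + aVec G R e * y e =
      aVec G (S ∩ R) e * y e + aVec G (S ∪ R) e * y e + 2 * (crxV G S R e * y e) :=
    fun e => by linear_combination (aVec_uncross G S R e) * y e
  rw [dp_eq_sum, dp_eq_sum, dp_eq_sum, dp_eq_sum, dp_eq_sum, Finset.mul_sum,
    ← Finset.sum_add_distrib, ← Finset.sum_add_distrib, ← Finset.sum_add_distrib]
  exact Finset.sum_congr rfl (fun e _ => key e)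


lemma cutSum_eq_dp (S : Finset V) (y : Sym2 V → ℝ) :
    cutSum G y (↑S : Set V) = dp (aVec G S) (WithLp.toLp 2 y) := by
  rw [dp_aVec, cutSum]
  apply Finset.sum_congr rfl
  intro e _
  congr 1

lemma cutSum_eq_dp' (T : Set V) (y : Sym2 V → ℝ) :
    cutSum G y T = dp (aVec G (Finset.univ.filter (· ∈ T))) (WithLp.toLp 2 y) := by
  rw [dp_aVec, cutSum]
  apply Finset.sum_congr rfl
  intro e _
  congr 1
  unfold crossE
  try simp only [Finset.mem_filter, Finset.mem_univ, true_and]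

/-- tight-cut uncrossing at a feasible point -/
lemma uncross_tight (y : Euc (Sym2 V)) (hynn : ∀ e, 0 ≤ y e)
    (hycut : ∀ S : Finset V, S.Nonempty → S ≠ Finset.univ → 2 ≤ dp (aVec G S) y)
    (v₀ : V) {S R : Finset V}
    (hS : S.Nonempty ∧ v₀ ∉ S ∧ dp (aVec G S) y = 2)
    (hR : R.Nonempty ∧ v₀ ∉ R ∧ dp (aVec G R) y = 2)
    (hcr : CrossF S R) :
    ((S ∩ R).Nonempty ∧ v₀ ∉ S ∩ R ∧ dp (aVec G (S ∩ R)) y = 2) ∧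
    ((S ∪ R).Nonempty ∧ v₀ ∉ S ∪ R ∧ dp (aVec G (S ∪ R)) y = 2) ∧
    aVec G S + aVec G R - aVec G (S ∩ R) - aVec G (S ∪ R) ∈
      Submodule.span ℝ (deltaV ''
        ((Finset.univ.filter (fun e => y e = 0) : Finset (Sym2 V)) : Set (Sym2 V))) := by
  obtain ⟨hSne, hSv₀, hStight⟩ := hS
  obtain ⟨hRne, hRv₀, hRtight⟩ := hR
  have hiv₀ : v₀ ∉ S ∩ R := fun h => hSv₀ (Finset.mem_inter.mp h).1
  have huv₀ : v₀ ∉ S ∪ R := fun h => (Finset.mem_union.mp h).elim hSv₀ hRv₀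
  have hine : (S ∩ R).Nonempty := hcr.2.2
  have hune : (S ∪ R).Nonempty := hSne.mono Finset.subset_union_left
  have hinuniv : S ∩ R ≠ Finset.univ := fun h => hiv₀ (h ▸ Finset.mem_univ v₀)
  have hununiv : S ∪ R ≠ Finset.univ := fun h => huv₀ (h ▸ Finset.mem_univ v₀)
  have h1 : 2 ≤ dp (aVec G (S ∩ R)) y := hycut _ hine hinuniv
  have h2 : 2 ≤ dp (aVec G (S ∪ R)) y := hycut _ hune hununiv
  have hq : 0 ≤ dp (crxV G S R) y := by
    rw [dp_eq_sum]
    apply Finset.sum_nonneg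
    intro e _
    exact mul_nonneg (crxV_nonneg G S R e) (hynn e)
  have hkey := dp_uncross G S R y
  rw [hStight, hRtight] at hkey
  have hq0 : dp (crxV G S R) y = 0 := by linarith
  have hint : dp (aVec G (S ∩ R)) y = 2 := by linarith
  have hunt : dp (aVec G (S ∪ R)) y = 2 := by linarith
  refine ⟨⟨hine, hiv₀, hint⟩, ⟨hune, huv₀, hunt⟩, ?_⟩
  have hvec : aVec G S + aVec G R - aVec G (S ∩ R) - aVec G (S ∪ R) =
      (2 : ℝ) • crxV G S R := by
    ext e
    have := aVec_uncross G S R e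
    simp only [PiLp.sub_apply, PiLp.add_apply, PiLp.smul_apply, smul_eq_mul]
    linarith
  rw [hvec]
  apply Submodule.smul_mem
  apply mem_span_deltaV
  intro e he
  simp only [Finset.coe_filter, Finset.mem_filter, Finset.mem_univ, true_and, Finset.mem_coe]
  -- y e = 0 for crossing-pair edges
  have hterm : crxV G S R e * y e = 0 := by
    have hall : ∀ e ∈ Finset.univ, 0 ≤ crxV G S R e * y e :=
      fun e _ => mul_nonneg (crxV_nonneg G S R e) (hynn e)
    have := (Finset.sum_eq_zero_iff_of_nonneg hall).mp (by rw [← dp_eq_sum] at *; exact hq0)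
      e (Finset.mem_univ e)
    exact this
  rcases mul_eq_zero.mp hterm with h | h
  · exact absurd h he
  · exact h

end Graph

lemma exists_laminar_span (G : SimpleGraph V) (y : Euc (Sym2 V)) (hynn : ∀ e, 0 ≤ y e)
    (hycut : ∀ S : Finset V, S.Nonempty → S ≠ Finset.univ → 2 ≤ dp (aVec G S) y)
    (v₀ : V) :
    ∃ L : Finset (Finset V),
      (∀ S ∈ L, S.Nonempty ∧ S ⊆ Finset.univ.erase v₀) ∧
      (∀ S ∈ L, ∀ R ∈ L, S ⊆ R ∨ R ⊆ S ∨ S ∩ R = ∅) ∧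
      ∀ S : Finset V, S.Nonempty → v₀ ∉ S → dp (aVec G S) y = 2 →
        aVec G S ∈ Submodule.span ℝ
          (((Finset.univ.filter (fun e => y e = 0)).image deltaV ∪
            L.image (aVec G) : Finset (Euc (Sym2 V))) : Set (Euc (Sym2 V))) := by
  set Z : Finset (Sym2 V) := Finset.univ.filter (fun e => y e = 0) with hZ
  set T : Finset (Finset V) :=
    Finset.univ.filter (fun S => S.Nonempty ∧ v₀ ∉ S ∧ dp (aVec G S) y = 2) with hT
  set cand : Finset (Finset (Finset V)) :=
    T.powerset.filter (fun L => ∀ S ∈ L, ∀ R ∈ L, S ⊆ R ∨ R ⊆ S ∨ S ∩ R = ∅) with hcand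
  have hcne : cand.Nonempty := by
    refine ⟨∅, Finset.mem_filter.mpr ⟨Finset.empty_mem_powerset T, ?_⟩⟩
    intro S hS; simp at hS
  obtain ⟨L, hLcand, hLmax⟩ := Finset.exists_max_image cand Finset.card hcne
  have hLT : L ⊆ T := Finset.mem_powerset.mp (Finset.mem_filter.mp hLcand).1
  have hLlam : ∀ S ∈ L, ∀ R ∈ L, S ⊆ R ∨ R ⊆ S ∨ S ∩ R = ∅ :=
    (Finset.mem_filter.mp hLcand).2
  set W : Submodule ℝ (Euc (Sym2 V)) :=
    Submodule.span ℝ ((Z.image deltaV ∪ L.image (aVec G) : Finset (Euc (Sym2 V))) :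
      Set (Euc (Sym2 V))) with hW
  have hTmem : ∀ S : Finset V, S ∈ T ↔ S.Nonempty ∧ v₀ ∉ S ∧ dp (aVec G S) y = 2 := by
    intro S; rw [hT]; simp
  have hLmem : ∀ S ∈ L, aVec G S ∈ W := by
    intro S hS
    apply Submodule.subset_span
    rw [Finset.coe_union]
    exact Set.mem_union_right _ (by simp only [Finset.coe_image]; exact ⟨S, hS, rfl⟩)
  have hZW : ∀ v : Euc (Sym2 V), v ∈ Submodule.span ℝ (deltaV '' (Z : Set (Sym2 V))) →
      v ∈ W := by
    intro v hv
    apply Submodule.span_mono (s := deltaV '' (Z : Set (Sym2 V))) ?_ hv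
    rw [Finset.coe_union, ← Finset.coe_image]
    exact Set.subset_union_left
  -- maximality: a tight set compatible with all of L is in L
  have hmaxprop : ∀ S ∈ T, S ∉ L → ∃ R ∈ L, CrossF S R := by
    intro S hST hSL
    by_contra h
    push_neg at h
    have hlam' : ∀ A ∈ insert S L, ∀ B ∈ insert S L, A ⊆ B ∨ B ⊆ A ∨ A ∩ B = ∅ := by
      intro A hA B hB
      have hcomp : ∀ Q ∈ L, S ⊆ Q ∨ Q ⊆ S ∨ S ∩ Q = ∅ := by
        intro Q hQ
        have := h Q hQ
        unfold CrossF at this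
        push_neg at this
        by_cases h1 : S ⊆ Q
        · exact Or.inl h1
        by_cases h2 : Q ⊆ S
        · exact Or.inr (Or.inl h2)
        · exact Or.inr (Or.inr (this h1 h2))
      rcases Finset.mem_insert.mp hA with rfl | hA' <;>
        rcases Finset.mem_insert.mp hB with h' | hB'
      · exact Or.inl (h' ▸ subset_rfl)
      · exact hcomp B hB'
      · subst h'
        rcases hcomp A hA' with h1 | h1 | h1
        · exact Or.inr (Or.inl h1)
        · exact Or.inl h1
        · exact Or.inr (Or.inr (by rw [Finset.inter_comm]; exact h1))
      · exact hLlam A hA' B hB'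
    have hins : insert S L ∈ cand := by
      refine Finset.mem_filter.mpr ⟨Finset.mem_powerset.mpr ?_, hlam'⟩
      intro A hA
      rcases Finset.mem_insert.mp hA with rfl | hA'
      · exact hST
      · exact hLT hA'
    have := hLmax _ hins
    rw [Finset.card_insert_of_notMem hSL] at this
    omega
  -- main induction
  have main : ∀ k : ℕ, ∀ S ∈ T, (L.filter (fun R => CrossF S R)).card ≤ k →
      aVec G S ∈ W := by
    intro k
    induction k with
    | zero =>
      intro S hST hcard
      by_cases hSL : S ∈ L
      · exact hLmem S hSL
      · obtain ⟨R, hRL, hcr⟩ := hmaxprop S hST hSL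
        exfalso
        have : R ∈ L.filter (fun R => CrossF S R) := Finset.mem_filter.mpr ⟨hRL, hcr⟩
        have := Finset.card_pos.mpr ⟨R, this⟩
        omega
    | succ k ih =>
      intro S hST hcard
      by_cases hSL : S ∈ L
      · exact hLmem S hSL
      obtain ⟨R, hRL, hcr⟩ := hmaxprop S hST hSL
      obtain ⟨hs1, hs2, hs3⟩ := hcr
      have hS' := (hTmem S).mp hST
      have hR' := (hTmem R).mp (hLT hRL)
      obtain ⟨hInt, hUnt, hz⟩ :=
        uncross_tight G y hynn hycut v₀ hS' hR' ⟨hs1, hs2, hs3⟩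
      -- crossing-count lemmas
      have lemA : ∀ Q ∈ L, CrossF (S ∩ R) Q → CrossF S Q ∧ Q ≠ R := by
        intro Q hQL hcrQ
        obtain ⟨hc1, hc2, hc3⟩ := hcrQ
        have hQR : Q ≠ R := by
          rintro rfl
          exact hc1 Finset.inter_subset_right
        refine ⟨?_, hQR⟩
        rcases hLlam Q hQL R hRL with hqr | hqr | hqr
        · refine ⟨?_, ?_, ?_⟩
          · intro h; exact hs1 (h.trans hqr)
          · intro h; exact hc2 (Finset.subset_inter h hqr)
          · obtain ⟨a, ha⟩ := hc3
            have h1 := Finset.mem_inter.mp ha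
            have h2 := Finset.mem_inter.mp h1.1
            exact ⟨a, Finset.mem_inter.mpr ⟨h2.1, h1.2⟩⟩
        · exact absurd (Finset.inter_subset_right.trans hqr) hc1
        · exfalso
          obtain ⟨a, ha⟩ := hc3
          have h1 := Finset.mem_inter.mp ha
          have h2 := Finset.mem_inter.mp h1.1
          have : a ∈ Q ∩ R := Finset.mem_inter.mpr ⟨h1.2, h2.2⟩
          simp [hqr] at this
      have lemB : ∀ Q ∈ L, CrossF (S ∪ R) Q → CrossF S Q ∧ Q ≠ R := by
        intro Q hQL hcrQ
        obtain ⟨hc1, hc2, hc3⟩ := hcrQ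
        have hQR : Q ≠ R := by
          rintro rfl
          exact hc2 Finset.subset_union_right
        refine ⟨?_, hQR⟩
        rcases hLlam Q hQL R hRL with hqr | hqr | hqr
        · exact absurd (hqr.trans Finset.subset_union_right) hc2
        · refine ⟨?_, ?_, ?_⟩
          · intro h; exact hc1 (Finset.union_subset h hqr)
          · intro h; exact hs2 (hqr.trans h)
          · obtain ⟨a, ha⟩ := hs3
            have h1 := Finset.mem_inter.mp ha
            exact ⟨a, Finset.mem_inter.mpr ⟨h1.1, hqr h1.2⟩⟩
        · refine ⟨?_, ?_, ?_⟩
          · intro h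
            obtain ⟨a, ha⟩ := hs3
            have h1 := Finset.mem_inter.mp ha
            have : a ∈ Q ∩ R := Finset.mem_inter.mpr ⟨h h1.1, h1.2⟩
            simp [hqr] at this
          · intro h; exact hc2 (h.trans Finset.subset_union_left)
          · obtain ⟨a, ha⟩ := hc3
            have h1 := Finset.mem_inter.mp ha
            rcases Finset.mem_union.mp h1.1 with h2 | h2
            · exact ⟨a, Finset.mem_inter.mpr ⟨h2, h1.2⟩⟩
            · exfalso
              have : a ∈ Q ∩ R := Finset.mem_inter.mpr ⟨h1.2, h2⟩
              simp [hqr] at this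
      have hRfil : R ∈ L.filter (fun R => CrossF S R) :=
        Finset.mem_filter.mpr ⟨hRL, hs1, hs2, hs3⟩
      have hsubA : L.filter (fun Q => CrossF (S ∩ R) Q) ⊆
          (L.filter (fun Q => CrossF S Q)).erase R := by
        intro Q hQ
        obtain ⟨hQL, hQcr⟩ := Finset.mem_filter.mp hQ
        obtain ⟨h1, h2⟩ := lemA Q hQL hQcr
        exact Finset.mem_erase.mpr ⟨h2, Finset.mem_filter.mpr ⟨hQL, h1⟩⟩
      have hsubB : L.filter (fun Q => CrossF (S ∪ R) Q) ⊆
          (L.filter (fun Q => CrossF S Q)).erase R := by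
        intro Q hQ
        obtain ⟨hQL, hQcr⟩ := Finset.mem_filter.mp hQ
        obtain ⟨h1, h2⟩ := lemB Q hQL hQcr
        exact Finset.mem_erase.mpr ⟨h2, Finset.mem_filter.mpr ⟨hQL, h1⟩⟩
      have hcardE : ((L.filter (fun Q => CrossF S Q)).erase R).card ≤ k := by
        rw [Finset.card_erase_of_mem hRfil]
        omega
      have ihA := ih (S ∩ R) ((hTmem _).mpr hInt)
        (le_trans (Finset.card_le_card hsubA) hcardE)
      have ihB := ih (S ∪ R) ((hTmem _).mpr hUnt)
        (le_trans (Finset.card_le_card hsubB) hcardE)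
      have hRW := hLmem R hRL
      have hzW := hZW _ hz
      have hdecomp : aVec G S =
          (aVec G S + aVec G R - aVec G (S ∩ R) - aVec G (S ∪ R)) +
            aVec G (S ∩ R) + aVec G (S ∪ R) - aVec G R := by abel
      rw [hdecomp]
      exact Submodule.sub_mem _ (Submodule.add_mem _ (Submodule.add_mem _ hzW ihA) ihB) hRW
  refine ⟨L, ?_, hLlam, ?_⟩
  · intro S hS
    have := (hTmem S).mp (hLT hS)
    refine ⟨this.1, ?_⟩
    intro a ha
    refine Finset.mem_erase.mpr ⟨?_, Finset.mem_univ a⟩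
    rintro rfl
    exact this.2.1 ha
  · intro S hne hv₀ htight
    exact main _ S ((hTmem S).mpr ⟨hne, hv₀, htight⟩) le_rfl

open Submodule in
lemma exists_tight_span_top {ι κ : Type*} [Fintype ι] [Fintype κ] (A : κ → Euc ι) (b : κ → ℝ)
    (hnd : ∀ d : Euc ι, (∀ i, dp (A i) d = 0) → d = 0)
    {y₀ : Euc ι} (hy₀ : ∀ i, dp (A i) y₀ ≤ b i) :
    ∃ y : Euc ι, (∀ i, dp (A i) y ≤ b i) ∧
      Submodule.span ℝ (A '' {i | dp (A i) y = b i}) = ⊤ := by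
  suffices H : ∀ k : ℕ, ∀ y : Euc ι, (∀ i, dp (A i) y ≤ b i) →
      Module.finrank ℝ (Euc ι) ≤
        Module.finrank ℝ (Submodule.span ℝ (A '' {i | dp (A i) y = b i})) + k →
      ∃ y' : Euc ι, (∀ i, dp (A i) y' ≤ b i) ∧
        Submodule.span ℝ (A '' {i | dp (A i) y' = b i}) = ⊤ by
    exact H (Module.finrank ℝ (Euc ι)) y₀ hy₀ (Nat.le_add_left _ _)
  intro k
  induction k with
  | zero =>
    intro y hy hrank
    refine ⟨y, hy, Submodule.eq_top_of_finrank_eq ?_⟩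
    exact le_antisymm (Submodule.finrank_le _) (by simpa using hrank)
  | succ k ih =>
    intro y hy hrank
    set U := Submodule.span ℝ (A '' {i | dp (A i) y = b i}) with hU
    by_cases htop : U = ⊤
    · exact ⟨y, hy, htop⟩
    have hbot : Uᗮ ≠ ⊥ := fun h => htop (Submodule.orthogonal_eq_bot_iff.mp h)
    obtain ⟨d, hdU, hd0⟩ := Submodule.exists_mem_ne_zero_of_ne_bot hbot
    have hdorth : ∀ v ∈ U, dp v d = 0 := fun v hv =>
      (Submodule.mem_orthogonal U d).mp hdU v hv
    have htight0 : ∀ i, dp (A i) y = b i → dp (A i) d = 0 := fun i hi =>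
      hdorth _ (Submodule.subset_span ⟨i, hi, rfl⟩)
    obtain ⟨i₀, hi₀⟩ : ∃ i, dp (A i) d ≠ 0 := by
      by_contra h
      push_neg at h
      exact hd0 (hnd d h)
    set d' : Euc ι := (dp (A i₀) d) • d with hd'
    have hd'eq : ∀ i, dp (A i) d' = dp (A i₀) d * dp (A i) d := fun i => by
      rw [hd', dp_smul_right]
    have hd'tight : ∀ i, dp (A i) y = b i → dp (A i) d' = 0 := by
      intro i hi
      rw [hd'eq, htight0 i hi, mul_zero]
    have hi₀pos : 0 < dp (A i₀) d' := by
      rw [hd'eq]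
      exact mul_self_pos.mpr hi₀
    -- positive-coefficient constraints
    set Kpos : Finset κ := Finset.univ.filter (fun i => 0 < dp (A i) d') with hKpos
    have hi₀mem : i₀ ∈ Kpos := by simp [hKpos, hi₀pos]
    have hKne : Kpos.Nonempty := ⟨i₀, hi₀mem⟩
    set f : κ → ℝ := fun i => (b i - dp (A i) y) / dp (A i) d' with hf
    set t : ℝ := Kpos.inf' hKne f with ht
    have htnonneg : 0 ≤ t := by
      rw [ht]
      apply Finset.le_inf'
      intro i hi
      have hipos : 0 < dp (A i) d' := by simpa [hKpos] using hi
      exact div_nonneg (by linarith [hy i]) hipos.le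
    set y' : Euc ι := y + t • d' with hy'
    have hval : ∀ i, dp (A i) y' = dp (A i) y + t * dp (A i) d' := by
      intro i; rw [hy', dp_add_right, dp_smul_right]
    have hy'mem : ∀ i, dp (A i) y' ≤ b i := by
      intro i
      rw [hval]
      by_cases hip : 0 < dp (A i) d'
      · have himem : i ∈ Kpos := by simp [hKpos, hip]
        have : t ≤ f i := Finset.inf'_le _ himem
        have := (le_div_iff₀ hip).mp (ht ▸ this)
        linarith
      · push_neg at hip
        nlinarith [hy i, mul_nonneg htnonneg (neg_nonneg.mpr hip)]
    -- tight set strictly grows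
    obtain ⟨i₁, hi₁mem, hi₁eq⟩ := Finset.exists_mem_eq_inf' hKne f
    have hi₁pos : 0 < dp (A i₁) d' := by simpa [hKpos] using hi₁mem
    have ht1 : t = f i₁ := by rw [ht, hi₁eq]
    have hi₁tight : dp (A i₁) y' = b i₁ := by
      rw [hval, ht1, hf]
      field_simp
      ring
    -- old tight constraints remain tight
    have hsub : {i | dp (A i) y = b i} ⊆ {i | dp (A i) y' = b i} := by
      intro i hi
      simp only [Set.mem_setOf_eq] at hi ⊢
      rw [hval, hd'tight i hi, mul_zero, add_zero]; exact hi
    set U' := Submodule.span ℝ (A '' {i | dp (A i) y' = b i}) with hU'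
    have hUle : U ≤ U' := Submodule.span_mono (Set.image_mono hsub)
    have hnew : A i₁ ∈ U' := Submodule.subset_span ⟨i₁, hi₁tight, rfl⟩
    have hnotold : A i₁ ∉ U := by
      intro h
      have := hdorth _ h
      have h2 := hd'eq i₁
      rw [this, mul_zero] at h2
      exact absurd h2 (ne_of_gt hi₁pos)
    have hlt : U < U' := lt_of_le_of_ne hUle (by
      intro h; exact hnotold (h ▸ hnew))
    have hr : Module.finrank ℝ U < Module.finrank ℝ U' :=
      Submodule.finrank_lt_finrank_of_lt hlt
    exact ih y' hy'mem (by rw [← hU']; omega)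

lemma laminar_card_aux {α : Type*} [DecidableEq α] (n : ℕ) :
    ∀ (X : Finset α), X.card ≤ n → ∀ L : Finset (Finset α),
      (∀ S ∈ L, S.Nonempty ∧ S ⊆ X) →
      (∀ S ∈ L, ∀ R ∈ L, S ⊆ R ∨ R ⊆ S ∨ S ∩ R = ∅) →
      L.card ≤ 2 * X.card - 1 := by
  induction n with
  | zero =>
    intro X hX L hmem _
    have hXe : X = ∅ := Finset.card_eq_zero.mp (Nat.le_zero.mp hX)
    have : L = ∅ := by
      rw [Finset.eq_empty_iff_forall_notMem]
      intro S hS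
      obtain ⟨hne, hsub⟩ := hmem S hS
      rw [hXe] at hsub
      exact absurd (Finset.subset_empty.mp hsub) (Finset.nonempty_iff_ne_empty.mp hne)
    simp [this]
  | succ n ih =>
    intro X hX L hmem hlam
    set Lp := L.filter (fun S => S ≠ X) with hLp
    by_cases hLpe : Lp = ∅
    · -- L ⊆ {X}
      have hsub : L ⊆ {X} := by
        intro S hS
        rcases eq_or_ne S X with h | h
        · simp [h]
        · exfalso
          have hmemLp : S ∈ Lp := Finset.mem_filter.mpr ⟨hS, h⟩
          rw [hLpe] at hmemLp
          simp at hmemLp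
      rcases Finset.eq_empty_or_nonempty L with h | h
      · simp [h]
      · obtain ⟨S, hS⟩ := h
        have hSX : S = X := by simpa using hsub hS
        have hXne : X.Nonempty := hSX ▸ (hmem S hS).1
        have h1 : 1 ≤ X.card := Finset.card_pos.mpr hXne
        calc L.card ≤ ({X} : Finset (Finset α)).card := Finset.card_le_card hsub
          _ = 1 := Finset.card_singleton X
          _ ≤ 2 * X.card - 1 := by omega
    · obtain ⟨S₀, hS₀Lp, hS₀max⟩ :=
        Finset.exists_max_image Lp Finset.card (Finset.nonempty_iff_ne_empty.mpr hLpe)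
      have hS₀L : S₀ ∈ L := (Finset.mem_filter.mp hS₀Lp).1
      have hS₀ne : S₀ ≠ X := (Finset.mem_filter.mp hS₀Lp).2
      have hS₀sub : S₀ ⊆ X := (hmem S₀ hS₀L).2
      have hS₀nonempty : S₀.Nonempty := (hmem S₀ hS₀L).1
      have hS₀ss : S₀ ⊂ X := Finset.ssubset_iff_subset_ne.mpr ⟨hS₀sub, hS₀ne⟩
      have hc₀lt : S₀.card < X.card := Finset.card_lt_card hS₀ss
      set L₁ := L.filter (fun S => S ⊆ S₀) with hL₁
      set L₂ := L.filter (fun S => S ∩ S₀ = ∅) with hL₂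
      have hcover : L ⊆ insert X (L₁ ∪ L₂) := by
        intro S hS
        rcases eq_or_ne S X with h | h
        · simp [h]
        · have hSLp : S ∈ Lp := Finset.mem_filter.mpr ⟨hS, h⟩
          rcases hlam S hS S₀ hS₀L with h1 | h1 | h1
          · exact Finset.mem_insert_of_mem (Finset.mem_union_left _
              (Finset.mem_filter.mpr ⟨hS, h1⟩))
          · -- S₀ ⊆ S : then S = S₀ (by maximality) so S ⊆ S₀
            have : S.card ≤ S₀.card := hS₀max S hSLp
            have heq : S₀ = S := Finset.eq_of_subset_of_card_le h1 this
            exact Finset.mem_insert_of_mem (Finset.mem_union_left _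
              (Finset.mem_filter.mpr ⟨hS, by rw [← heq]⟩))
          · exact Finset.mem_insert_of_mem (Finset.mem_union_right _
              (Finset.mem_filter.mpr ⟨hS, h1⟩))
      have h1c : 1 ≤ S₀.card := Finset.card_pos.mpr hS₀nonempty
      have hcard1 : L₁.card ≤ 2 * S₀.card - 1 := by
        apply ih S₀ (by omega)
        · intro S hS
          exact ⟨(hmem S (Finset.mem_filter.mp hS).1).1, (Finset.mem_filter.mp hS).2⟩
        · intro S hS R hR
          exact hlam S (Finset.mem_filter.mp hS).1 R (Finset.mem_filter.mp hR).1
      have hsd : (X \ S₀).card = X.card - S₀.card := Finset.card_sdiff_of_subset hS₀sub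
      have hk₂ : 1 ≤ (X \ S₀).card := by omega
      have hcard2 : L₂.card ≤ 2 * (X \ S₀).card - 1 := by
        apply ih (X \ S₀) (by omega)
        · intro S hS
          obtain ⟨hSL, hdisj⟩ := Finset.mem_filter.mp hS
          refine ⟨(hmem S hSL).1, ?_⟩
          intro a ha
          refine Finset.mem_sdiff.mpr ⟨(hmem S hSL).2 ha, ?_⟩
          intro haS₀
          have : a ∈ S ∩ S₀ := Finset.mem_inter.mpr ⟨ha, haS₀⟩
          simp [hdisj] at this
        · intro S hS R hR
          exact hlam S (Finset.mem_filter.mp hS).1 R (Finset.mem_filter.mp hR).1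
      have : L.card ≤ 1 + (L₁.card + L₂.card) := by
        calc L.card ≤ (insert X (L₁ ∪ L₂)).card := Finset.card_le_card hcover
          _ ≤ (L₁ ∪ L₂).card + 1 := Finset.card_insert_le _ _
          _ ≤ L₁.card + L₂.card + 1 := by
              have := Finset.card_union_le L₁ L₂
              omega
          _ = 1 + (L₁.card + L₂.card) := by omega
      omega

def sysA (G : SimpleGraph V) (F : Finset (Sym2 V)) (cv : Euc (Sym2 V)) :
    Sym2 V ⊕ (Sym2 V ⊕ (Finset V ⊕ Bool)) → Euc (Sym2 V)
  | .inl e => -(deltaV e)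
  | .inr (.inl e) => if e ∈ F then 0 else deltaV e
  | .inr (.inr (.inl S)) => if S.Nonempty ∧ S ≠ Finset.univ then -(aVec G S) else 0
  | .inr (.inr (.inr b)) => if b then cv else onesV

def sysB (V : Type*) [Fintype V] [DecidableEq V] (K M : ℝ) :
    Sym2 V ⊕ (Sym2 V ⊕ (Finset V ⊕ Bool)) → ℝ
  | .inl _ => 0
  | .inr (.inl _) => 0
  | .inr (.inr (.inl S)) => if S.Nonempty ∧ S ≠ Finset.univ then -2 else 0
  | .inr (.inr (.inr b)) => if b then K else M


/-- Sparsification of 2ECSS LP solutions (Theorem: sparsifying-2ecss). -/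
theorem sparsify_2ecss_solution :
    ∃ C : ℝ, 0 < C ∧
      ∀ (V : Type) [Fintype V] [DecidableEq V] (G : SimpleGraph V)
        (c x : Sym2 V → ℝ) (ε : ℝ),
        2 ≤ Fintype.card V →
        (∀ e ∈ G.edgeSet, 0 ≤ c e) →
        0 < ε → ε < 1 →
        Feas2ECSS G x →
        ∃ y : Sym2 V → ℝ,
          Feas2ECSS G y ∧
          lpSupport G y ⊆ lpSupport G x ∧
          ((lpSupport G y).card : ℝ) ≤
            C * Fintype.card V * Real.log (Fintype.card V) / ε ^ 2 ∧
          lpCost G c y ≤ (1 + ε) * lpCost G c x := by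
  refine ⟨6, by norm_num, ?_⟩
  intro V _ _ G c x ε hn hc hε0 hε1 hx
  obtain ⟨v₀⟩ : Nonempty V := Fintype.card_pos_iff.mp (by omega)
  set F : Finset (Sym2 V) := lpSupport G x with hF
  have hFedge : ∀ e ∈ F, e ∈ G.edgeSet ∧ x e ≠ 0 := by
    intro e he
    exact (Finset.mem_filter.mp he).2
  set cvec : Euc (Sym2 V) := WithLp.toLp 2 (fun e => if e ∈ F then c e else 0) with hcvec
  set xc : Euc (Sym2 V) := WithLp.toLp 2 (fun e => if e ∈ F then min (x e) 2 else 0) with hxc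
  set K : ℝ := lpCost G c x with hK
  set M : ℝ := ∑ e, xc e with hM
  have hxcnn : ∀ e, 0 ≤ xc e := by
    intro e
    rw [hxc]
    dsimp only
    split
    · rename_i he
      exact le_min (hx.1 e (hFedge e he).1) (by norm_num)
    · exact le_rfl
  -- nondegeneracy
  have hnd : ∀ d : Euc (Sym2 V), (∀ i, dp (sysA G F cvec i) d = 0) → d = 0 := by
    intro d h
    ext e
    have := h (.inl e)
    rw [sysA, dp_neg_left, dp_deltaV] at this
    simpa using (neg_eq_zero.mp this)
  -- feasibility of xc
  have hxfeas : ∀ i, dp (sysA G F cvec i) xc ≤ sysB V K M i := by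
    rintro (e | e | S | bb)
    · rw [sysA, sysB, dp_neg_left, dp_deltaV]
      linarith [hxcnn e]
    · rw [sysA, sysB]
      by_cases he : e ∈ F
      · rw [if_pos he, dp_zero_left]
      · rw [if_neg he, dp_deltaV, hxc]
        simp [he]
    · rw [sysA, sysB]
      by_cases hv : S.Nonempty ∧ S ≠ Finset.univ
      · rw [if_pos hv, if_pos hv, dp_neg_left, neg_le_neg_iff]
        -- cut constraint for xc
        have hxcut : 2 ≤ dp (aVec G S) (WithLp.toLp 2 x) := by
          rw [← cutSum_eq_dp]
          apply hx.2
          · exact Finset.coe_nonempty.mpr hv.1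
          · intro h
            exact hv.2 (Finset.coe_injective (by rw [h, Finset.coe_univ]))
        rw [dp_aVec]
        rw [dp_aVec] at hxcut
        by_cases hbig : ∃ e, crossE G S e ∧ 2 < x e
        · obtain ⟨e₀, hce, h2⟩ := hbig
          have he₀F : e₀ ∈ F := by
            rw [hF]
            exact Finset.mem_filter.mpr ⟨Finset.mem_univ _, hce.1, by linarith⟩
          have hterm : (if crossE G S e₀ then xc e₀ else 0) = 2 := by
            rw [if_pos hce, hxc]
            simp only
            rw [if_pos he₀F, min_eq_right (by linarith)]
          calc (2:ℝ) = if crossE G S e₀ then xc e₀ else 0 := hterm.symm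
            _ ≤ ∑ e, if crossE G S e then xc e else 0 := by
                apply Finset.single_le_sum (f := fun e => if crossE G S e then xc e else 0)
                · intro e _
                  split
                  · exact hxcnn e
                  · exact le_rfl
                · exact Finset.mem_univ e₀
        · push_neg at hbig
          have : ∀ e, (if crossE G S e then xc e else 0) = (if crossE G S e then x e else 0) := by
            intro e
            by_cases hce : crossE G S e
            · rw [if_pos hce, if_pos hce, hxc]
              simp only
              by_cases hx0 : x e = 0
              · have heF : e ∉ F := by
                  rw [hF]
                  intro h
                  exact (Finset.mem_filter.mp h).2.2 hx0
                rw [if_neg heF, hx0]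
              · have heF : e ∈ F := by
                  rw [hF]
                  exact Finset.mem_filter.mpr ⟨Finset.mem_univ _, hce.1, hx0⟩
                rw [if_pos heF, min_eq_left (hbig e hce)]
            · rw [if_neg hce, if_neg hce]
          calc (2:ℝ) ≤ ∑ e, if crossE G S e then x e else 0 := hxcut
            _ = ∑ e, if crossE G S e then xc e else 0 :=
              (Finset.sum_congr rfl (fun e _ => this e)).symm
      · rw [if_neg hv, if_neg hv, dp_zero_left]
    · cases bb
      · -- total mass
        have : dp onesV xc ≤ M := by
          rw [dp_onesV, hM]
        simpa [sysA, sysB] using this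
      · -- cost
        have : dp cvec xc ≤ K := by
          rw [dp_eq_sum, hK, lpCost]
          apply Finset.sum_le_sum
          intro e _
          by_cases heF : e ∈ F
          · have hedge := (hFedge e heF).1
            have h1 : cvec e = c e := by rw [hcvec]; simp [heF]
            have h2 : xc e = min (x e) 2 := by rw [hxc]; simp [heF]
            rw [h1, h2, if_pos hedge]
            exact mul_le_mul_of_nonneg_left (min_le_left _ _) (hc e hedge)
          · have h2 : xc e = 0 := by rw [hxc]; simp [heF]
            rw [h2, mul_zero]
            split
            · exact mul_nonneg (hc e (by assumption)) (hx.1 e (by assumption))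
            · exact le_rfl
        simpa [sysA, sysB] using this
  -- get the vertex solution
  obtain ⟨y, hyP, hspan⟩ := exists_tight_span_top (sysA G F cvec) (sysB V K M) hnd hxfeas
  have hynn : ∀ e, 0 ≤ y e := by
    intro e
    have := hyP (.inl e)
    rw [sysA, sysB, dp_neg_left, dp_deltaV] at this
    linarith
  have hyoff : ∀ e, e ∉ F → y e = 0 := by
    intro e he
    have := hyP (.inr (.inl e))
    rw [sysA, sysB, if_neg he, dp_deltaV] at this
    linarith [hynn e]
  have hycut : ∀ S : Finset V, S.Nonempty → S ≠ Finset.univ → 2 ≤ dp (aVec G S) y := by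
    intro S h1 h2
    have := hyP (.inr (.inr (.inl S)))
    rw [sysA, sysB, if_pos ⟨h1, h2⟩, if_pos ⟨h1, h2⟩, dp_neg_left] at this
    linarith
  have hycost : dp cvec y ≤ K := by
    have := hyP (.inr (.inr (.inr true)))
    rw [sysA, sysB] at this
    simpa using this
  -- feasibility
  have hyfeas : Feas2ECSS G y := by
    constructor
    · exact fun e _ => hynn e
    · intro T hTne hTuniv
      rw [cutSum_eq_dp']
      apply hycut
      · obtain ⟨t, ht⟩ := hTne
        exact ⟨t, Finset.mem_filter.mpr ⟨Finset.mem_univ t, ht⟩⟩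
      · obtain ⟨w, hw⟩ := Set.ne_univ_iff_exists_notMem T |>.mp hTuniv
        intro h
        have : w ∈ Finset.univ.filter (· ∈ T) := by rw [h]; exact Finset.mem_univ w
        exact hw (Finset.mem_filter.mp this).2
  -- support inclusion
  have hsupp : lpSupport G y ⊆ F := by
    intro e he
    by_contra heF
    exact (Finset.mem_filter.mp he).2.2 (hyoff e heF)
  -- cost bound
  have hcosteq : lpCost G c y = dp cvec y := by
    rw [lpCost, dp_eq_sum]
    apply Finset.sum_congr rfl
    intro e _
    by_cases heF : e ∈ F
    · have hedge := (hFedge e heF).1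
      have h1 : cvec e = c e := by rw [hcvec]; simp [heF]
      rw [if_pos hedge, h1]
    · have h1 : cvec e = 0 := by rw [hcvec]; simp [heF]
      rw [h1, zero_mul, hyoff e heF]
      split
      · rw [mul_zero]
      · rfl
  have hKnn : 0 ≤ K := by
    rw [hK, lpCost]
    apply Finset.sum_nonneg
    intro e _
    split
    · exact mul_nonneg (hc e (by assumption)) (hx.1 e (by assumption))
    · exact le_rfl
  have hcost : lpCost G c y ≤ (1 + ε) * lpCost G c x := by
    rw [hcosteq, ← hK]
    nlinarith [hycost, hKnn, hε0.le]
  -- cardinality bound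
  obtain ⟨L, hLground, hLlam, hLspan⟩ := exists_laminar_span G y hynn hycut v₀
  set Z : Finset (Sym2 V) := Finset.univ.filter (fun e => y e = 0) with hZ
  set gen : Finset (Euc (Sym2 V)) :=
    (Z.image deltaV ∪ L.image (aVec G)) ∪ {cvec, onesV} with hgen
  have hsub1 : ((Z.image deltaV ∪ L.image (aVec G) : Finset (Euc (Sym2 V))) :
      Set (Euc (Sym2 V))) ⊆ (gen : Set (Euc (Sym2 V))) := by
    rw [hgen]
    intro v hv
    rw [Finset.coe_union]
    exact Set.mem_union_left _ hv
  have hzmem : ∀ e ∈ Z, deltaV e ∈ (gen : Set (Euc (Sym2 V))) := by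
    intro e he
    apply hsub1
    rw [Finset.coe_union]
    exact Set.mem_union_left _ (by rw [Finset.coe_image]; exact ⟨e, he, rfl⟩)
  -- span of gen is everything
  have hgentop : (⊤ : Submodule ℝ (Euc (Sym2 V))) ≤
      Submodule.span ℝ (gen : Set (Euc (Sym2 V))) := by
    rw [← hspan]
    rw [Submodule.span_le]
    rintro v ⟨i, hi, rfl⟩
    rcases i with e | e | S | bb
    · -- tight nonnegativity constraint
      have : dp (sysA G F cvec (.inl e)) y = sysB V K M (.inl e) := hi
      rw [sysA, sysB, dp_neg_left, dp_deltaV] at this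
      have hy0 : y e = 0 := by linarith
      have heZ : e ∈ Z := by rw [hZ]; exact Finset.mem_filter.mpr ⟨Finset.mem_univ _, hy0⟩
      rw [sysA]
      exact Submodule.neg_mem _ (Submodule.subset_span (hzmem e heZ))
    · rw [sysA]
      by_cases heF : e ∈ F
      · rw [if_pos heF]
        exact Submodule.zero_mem _
      · rw [if_neg heF]
        have heZ : e ∈ Z := by
          rw [hZ]
          exact Finset.mem_filter.mpr ⟨Finset.mem_univ _, hyoff e heF⟩
        exact Submodule.subset_span (hzmem e heZ)
    · rw [sysA]
      by_cases hv : S.Nonempty ∧ S ≠ Finset.univ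
      · rw [if_pos hv]
        have : dp (sysA G F cvec (.inr (.inr (.inl S)))) y
            = sysB V K M (.inr (.inr (.inl S))) := hi
        rw [sysA, sysB, if_pos hv, if_pos hv, dp_neg_left] at this
        have htight : dp (aVec G S) y = 2 := by linarith
        apply Submodule.neg_mem
        have hmem : aVec G S ∈ Submodule.span ℝ
            ((Z.image deltaV ∪ L.image (aVec G) : Finset (Euc (Sym2 V))) :
              Set (Euc (Sym2 V))) := by
          by_cases hv₀ : v₀ ∈ S
          · have hS' : (Finset.univ \ S).Nonempty := by
              rw [Finset.sdiff_nonempty]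
              intro hsub
              exact hv.2 (Finset.eq_univ_iff_forall.mpr (fun a => hsub (Finset.mem_univ a)))
            have hv₀' : v₀ ∉ Finset.univ \ S := by simp [hv₀]
            have htight' : dp (aVec G (Finset.univ \ S)) y = 2 := by
              rw [aVec_compl]; exact htight
            have := hLspan _ hS' hv₀' htight'
            rw [aVec_compl] at this
            exact this
          · exact hLspan S hv.1 hv₀ htight
        exact Submodule.span_mono hsub1 hmem
      · rw [if_neg hv]
        exact Submodule.zero_mem _
    · rw [sysA]
      cases bb
      · simp only [Bool.false_eq_true, if_false]
        apply Submodule.subset_span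
        rw [hgen, Finset.coe_union]
        apply Set.mem_union_right
        simp
      · simp only [if_true]
        apply Submodule.subset_span
        rw [hgen, Finset.coe_union]
        apply Set.mem_union_right
        simp
  -- counting
  have hcount : Fintype.card (Sym2 V) ≤ gen.card := by
    have h1 : Submodule.span ℝ (gen : Set (Euc (Sym2 V))) = ⊤ := le_antisymm le_top hgentop
    have h2 : Module.finrank ℝ (Euc (Sym2 V)) =
        Module.finrank ℝ (Submodule.span ℝ (gen : Set (Euc (Sym2 V)))) := by
      rw [h1]
      exact (finrank_top ℝ _).symm
    have h3 := finrank_span_finset_le_card (R := ℝ) gen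
    rw [← finrank_euclideanSpace (𝕜 := ℝ) (ι := Sym2 V)]
    calc Module.finrank ℝ (Euc (Sym2 V))
        = Module.finrank ℝ (Submodule.span ℝ (gen : Set (Euc (Sym2 V)))) := h2
      _ ≤ gen.card := h3
  have hgencard : gen.card ≤ Z.card + L.card + 2 := by
    calc gen.card ≤ (Z.image deltaV ∪ L.image (aVec G)).card + ({cvec, onesV} :
          Finset (Euc (Sym2 V))).card := Finset.card_union_le _ _
      _ ≤ ((Z.image deltaV).card + (L.image (aVec G)).card) + 2 := by
          have h1 := Finset.card_union_le (Z.image deltaV) (L.image (aVec G))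
          have h2 : ({cvec, onesV} : Finset (Euc (Sym2 V))).card ≤ 2 := by
            apply le_trans (Finset.card_insert_le _ _)
            simp
          omega
      _ ≤ Z.card + L.card + 2 := by
          have h1 := Finset.card_image_le (s := Z) (f := deltaV)
          have h2 := Finset.card_image_le (s := L) (f := aVec G)
          omega
  have hLcard : L.card ≤ 2 * (Fintype.card V - 1) - 1 := by
    have := laminar_card_aux (Finset.univ.erase v₀).card (Finset.univ.erase v₀) le_rfl
      L hLground hLlam
    rwa [Finset.card_erase_of_mem (Finset.mem_univ v₀), Finset.card_univ] at this
  have hsplit : Z.card + (Finset.univ.filter (fun e => y e ≠ 0)).card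
      = Fintype.card (Sym2 V) := by
    rw [hZ]
    rw [Finset.card_filter_add_card_filter_not (p := fun e => y e = 0)]
    exact Finset.card_univ
  have hsuppnat : (lpSupport G y).card ≤ 2 * Fintype.card V - 1 := by
    have h1 : lpSupport G y ⊆ Finset.univ.filter (fun e => y e ≠ 0) := by
      intro e he
      exact Finset.mem_filter.mpr ⟨Finset.mem_univ _, (Finset.mem_filter.mp he).2.2⟩
    have h2 := Finset.card_le_card h1
    omega
  refine ⟨y, hyfeas, hsupp, ?_, hcost⟩
  -- numeric bound
  have hn2 : (2:ℝ) ≤ (Fintype.card V : ℝ) := by exact_mod_cast hn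
  have hcardle : ((lpSupport G y).card : ℝ) ≤ 2 * (Fintype.card V : ℝ) := by
    have : ((lpSupport G y).card : ℝ) ≤ ((2 * Fintype.card V - 1 : ℕ) : ℝ) := by
      exact_mod_cast hsuppnat
    have h2 : ((2 * Fintype.card V - 1 : ℕ) : ℝ) ≤ 2 * (Fintype.card V : ℝ) := by
      have : (1:ℕ) ≤ 2 * Fintype.card V := by omega
      push_cast [this]
      linarith
    linarith
  have hlog : (1:ℝ)/2 ≤ Real.log (Fintype.card V) := by
    have h1 : Real.log 2 ≤ Real.log (Fintype.card V) :=
      Real.log_le_log (by norm_num) hn2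
    linarith [Real.log_two_gt_d9]
  have hε2 : ε^2 ≤ 1 := by nlinarith
  have hεpos : (0:ℝ) < ε^2 := by positivity
  rw [le_div_iff₀ hεpos]
  calc ((lpSupport G y).card : ℝ) * ε^2 ≤ 2 * (Fintype.card V : ℝ) * 1 := by
        apply mul_le_mul hcardle hε2 (by positivity) (by positivity)
    _ ≤ 6 * (Fintype.card V : ℝ) * Real.log (Fintype.card V) := by nlinarith
end
end

section
/- Let V be a finite set with |V| ≥ 3, let c be a metric cost on the complete graph over V, let H be a Hamiltonian cycle on V, and let T ⊆ V be a nonempty set of even cardinality. Then there exists a T-join J of the complete graph over V whose cost is at most half the cost of H. In particular, the minimum cost of a T-join is at most half the minimum cost of a Hamiltonian cycle. -/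
open scoped Classical

noncomputable section

variable {V : Type*} [Fintype V] [DecidableEq V]

/-- A metric cost on the complete graph over `V`, given as a (symmetric) function
on unordered pairs: nonnegative, zero on the diagonal, and satisfying the
triangle inequality. -/
def IsMetricCost {V : Type*} (c : Sym2 V → ℝ) : Prop :=
  (∀ e, 0 ≤ c e) ∧ (∀ v, c s(v, v) = 0) ∧
    ∀ u v w, c s(u, w) ≤ c s(u, v) + c s(v, w)

/-- The degree of a vertex `v` in a set of edges `M`. -/
def degIn (M : Finset (Sym2 V)) (v : V) : ℕ := (M.filter fun e => v ∈ e).card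

/-- `M` is a spanning tree of `G`: a set of edges of `G` forming a connected
acyclic subgraph on all of `V`. -/
def IsSpanningTree (G : SimpleGraph V) (M : Finset (Sym2 V)) : Prop :=
  (M : Set (Sym2 V)) ⊆ G.edgeSet ∧ (SimpleGraph.fromEdgeSet (M : Set (Sym2 V))).IsTree

/-- `J` is a `T`-join of `G`: a set of edges of `G` such that the vertices of odd
degree in `J` are exactly those of `T`. -/
def IsTJoin (G : SimpleGraph V) (T : Set V) (J : Finset (Sym2 V)) : Prop :=
  (J : Set (Sym2 V)) ⊆ G.edgeSet ∧ ∀ v, v ∈ T ↔ Odd (degIn J v)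

set_option linter.unusedSectionVars false

namespace TJoinAux

variable {W : Type} [DecidableEq W]

/-- pair up consecutive elements -/
def pairs : List W → List (Sym2 W)
  | a :: b :: l => s(a, b) :: pairs l
  | _ => []

def chainSum (c : Sym2 W → ℝ) : List W → ℝ
  | a :: b :: l => c s(a, b) + chainSum c (b :: l)
  | _ => 0

@[simp] lemma pairs_nil : pairs ([] : List W) = [] := rfl
@[simp] lemma pairs_singleton (a : W) : pairs [a] = [] := rfl
@[simp] lemma pairs_cons (a b : W) (l : List W) : pairs (a :: b :: l) = s(a, b) :: pairs l := rfl

lemma mem_of_mem_pairs : ∀ (l : List W) (e : Sym2 W), e ∈ pairs l → ∀ x ∈ e, x ∈ l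
  | a :: b :: l, e, he, x, hx => by
    simp only [pairs_cons, List.mem_cons] at he
    rcases he with rfl | he
    · rcases Sym2.mem_iff.mp hx with rfl | rfl <;> simp
    · have := mem_of_mem_pairs l e he x hx
      simp [this]

lemma not_isDiag_of_mem_pairs : ∀ (l : List W), l.Nodup → ∀ e ∈ pairs l, ¬e.IsDiag
  | a :: b :: l, h, e, he => by
    simp only [pairs_cons, List.mem_cons] at he
    rcases he with rfl | he
    · simp only [Sym2.isDiag_iff_proj_eq]
      rintro rfl
      simp at h
    · exact not_isDiag_of_mem_pairs l ((List.nodup_cons.mp h).2.sublist (by simp)) e he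

lemma pairs_nodup : ∀ (l : List W), l.Nodup → (pairs l).Nodup
  | [], _ => by simp
  | [a], _ => by simp
  | a :: b :: l, h => by
    simp only [pairs_cons, List.nodup_cons]
    have hl : l.Nodup := ((List.nodup_cons.mp h).2.sublist (by simp))
    refine ⟨fun hmem => ?_, pairs_nodup l hl⟩
    have : a ∈ l := mem_of_mem_pairs l _ hmem a (by simp)
    simp [this] at h

lemma length_filter_pairs (v : W) : ∀ (l : List W), l.Nodup → Even l.length →
    ((pairs l).filter (fun e => decide (v ∈ e))).length = if v ∈ l then 1 else 0
  | [], _, _ => by simp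
  | [a], _, he => by simp at he
  | a :: b :: l, h, he => by
    have hl : l.Nodup := ((List.nodup_cons.mp h).2.sublist (by simp))
    have hel : Even l.length := by
      simpa [Nat.even_add_one, parity_simps] using he
    have ih := length_filter_pairs v l hl hel
    have hanl : a ∉ l := fun hx => by simp [hx] at h
    have hbnl : b ∉ l := fun hx => by simp [hx] at h
    by_cases hva : v = a
    · subst hva
      have hm : v ∈ s(v, b) := by simp
      rw [pairs_cons, List.filter_cons, if_pos (by simpa using hm), List.length_cons, ih,
        if_neg hanl, if_pos (by simp)]
    · by_cases hvb : v = b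
      · subst hvb
        have hm : v ∈ s(a, v) := by simp
        rw [pairs_cons, List.filter_cons, if_pos (by simpa using hm), List.length_cons, ih,
          if_neg hbnl, if_pos (by simp)]
      · have hm : v ∉ s(a, b) := by
          simp only [Sym2.mem_iff]
          tauto
        rw [pairs_cons, List.filter_cons, if_neg (by simpa using hm), ih]
        by_cases hvl : v ∈ l <;> simp [hva, hvb, hvl]

lemma pairs_append : ∀ (l r : List W), Even l.length → pairs (l ++ r) = pairs l ++ pairs r
  | [], r, _ => by simp
  | [a], r, h => by simp at h
  | a :: b :: l, r, h => by
    have hel : Even l.length := by simpa [Nat.even_add_one, parity_simps] using h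
    simp [pairs_append l r hel]

lemma chainSum_eq (c : Sym2 W → ℝ) :
    ∀ l : List W, chainSum c l = ((pairs l).map c).sum + ((pairs l.tail).map c).sum
  | [] => by simp [chainSum]
  | [a] => by simp [chainSum]
  | a :: b :: l => by
    have ih := chainSum_eq c (b :: l)
    simp only [chainSum, pairs_cons, List.map_cons, List.sum_cons, List.tail_cons] at *
    rw [ih]
    ring

lemma chainSum_cons_le {c : Sym2 W → ℝ} (hc : IsMetricCost c) (a x : W) :
    ∀ L : List W, chainSum c (a :: L) ≤ c s(a, x) + chainSum c (x :: L)
  | [] => by simpa [chainSum] using hc.1 s(a, x)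
  | y :: L => by
    show c s(a, y) + chainSum c (y :: L) ≤ c s(a, x) + (c s(x, y) + chainSum c (y :: L))
    have := hc.2.2 a x y
    linarith

lemma chainSum_le_walk {c : Sym2 W → ℝ} (hc : IsMetricCost c) (S : Finset W)
    {G : SimpleGraph W} :
    ∀ {a b : W} (p : G.Walk a b),
      chainSum c (a :: p.support.tail.filter (fun u => decide (u ∈ S))) ≤ (p.edges.map c).sum := by
  intro a b p
  induction p with
  | nil => simp [chainSum, List.sum_nil]
  | @cons a x b h q ih =>
    rw [SimpleGraph.Walk.support_cons, List.tail_cons, q.support_eq_cons,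
      SimpleGraph.Walk.edges_cons, List.map_cons, List.sum_cons, List.filter_cons]
    by_cases hx : x ∈ S
    · rw [if_pos (by simpa using hx)]
      have h2 : chainSum c (a :: x :: q.support.tail.filter (fun u => decide (u ∈ S)))
          = c s(a, x) + chainSum c (x :: q.support.tail.filter (fun u => decide (u ∈ S))) := rfl
      rw [h2]
      linarith [ih]
    · rw [if_neg (by simpa using hx)]
      have h2 := chainSum_cons_le hc a x (q.support.tail.filter (fun u => decide (u ∈ S)))
      linarith [ih]

lemma degIn_pairs [Fintype W] (v : W) (l : List W) (hnd : l.Nodup) (he : Even l.length) :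
    degIn ((pairs l).toFinset) v = if v ∈ l then 1 else 0 := by
  have h1 : ((pairs l).toFinset.filter fun e => v ∈ e)
      = ((pairs l).filter (fun e => decide (v ∈ e))).toFinset := by
    ext e
    simp [List.mem_filter, Finset.mem_filter]
  rw [degIn, h1, List.toFinset_card_of_nodup ((pairs_nodup l hnd).filter _),
    length_filter_pairs v l hnd he]

end TJoinAux

/-- For any Hamiltonian cycle `H` on a metric complete graph and any nonempty even
set `T`, there is a `T`-join of cost at most half the cost of `H`.  In particular,
the minimum cost of a `T`-join is at most half the minimum cost of a Hamiltonian
cycle. -/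
theorem exists_tjoin_le_half_ham {V : Type} [Fintype V] [DecidableEq V]
    (c : Sym2 V → ℝ) (hc : IsMetricCost c) (hn : 3 ≤ Fintype.card V)
    (v : V) (w : (⊤ : SimpleGraph V).Walk v v) (hw : w.IsHamiltonianCycle)
    (T : Finset V) (hT : T.Nonempty) (hTeven : Even T.card) :
    ∃ J : Finset (Sym2 V), IsTJoin (⊤ : SimpleGraph V) (T : Set V) J ∧
      ∑ e ∈ J, c e ≤ (1 / 2) * (w.edges.map c).sum := by
  classical
  obtain ⟨t, htT⟩ := hT
  have ht : t ∈ w.support := hw.mem_support t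
  set w' := w.rotate t ht with hw'def
  have hcyc : w'.IsCycle := hw.isCycle.rotate ht
  have hnd : w'.support.tail.Nodup := hcyc.support_nodup
  have hmemtail : ∀ u : V, u ∈ w'.support.tail := by
    intro u
    have h1 : u ∈ w.support.tail := by
      have h2 := hw.isHamiltonian_tail.mem_support u
      rwa [SimpleGraph.Walk.support_tail_of_not_nil _ hw.isCycle.not_nil] at h2
    exact ((SimpleGraph.Walk.support_rotate w t ht).perm.mem_iff).mpr h1
  have hcost : ((w'.edges).map c).sum = ((w.edges).map c).sum :=
    ((SimpleGraph.Walk.rotate_edges w t ht).map c).perm.sum_eq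
  set s : List V := w'.support.tail with hsdef
  have hsne : s ≠ [] := List.ne_nil_of_mem (hmemtail t)
  have hlast : s.getLast? = some t := by
    have h1 : w'.support.getLast? = some t := by
      rw [List.getLast?_eq_getLast (l := w'.support) (by simp)]
      exact congrArg some w'.getLast_support
    rw [w'.support_eq_cons] at h1
    cases hseq : s with
    | nil => exact absurd hseq hsne
    | cons sh st =>
      rw [← hsdef, hseq, List.getLast?_cons_cons] at h1
      exact h1
  have hsplit : s = s.dropLast ++ [t] :=
    (List.dropLast_append_getLast? t (Option.mem_def.mpr hlast)).symm
  have hndsplit := hnd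
  rw [hsplit, List.nodup_append] at hndsplit
  have hdnd : s.dropLast.Nodup := hndsplit.1
  have htnd : t ∉ s.dropLast := fun hm => hndsplit.2.2 t hm t (by simp) rfl
  set F0 : List V := s.dropLast.filter (fun u => decide (u ∈ T)) with hF0def
  have hF0nd : F0.Nodup := hdnd.filter _
  have htF0 : t ∉ F0 := fun hm => htnd (List.mem_of_mem_filter hm)
  have hF0T : ∀ u ∈ F0, u ∈ T := fun u hu => by simpa using (List.mem_filter.mp hu).2
  set l1 : List V := t :: F0 with hl1def
  set l2 : List V := F0 ++ [t] with hl2def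
  have hperm : List.Perm l2 l1 := List.perm_append_singleton t F0
  have hmem1 : ∀ u, u ∈ l1 ↔ u ∈ T := by
    intro u
    constructor
    · intro hu
      rcases List.mem_cons.mp hu with rfl | hu
      · exact htT
      · exact hF0T u hu
    · intro hu
      have h5 : u ∈ s.dropLast ++ [t] := by rw [← hsplit]; exact hmemtail u
      rcases List.mem_append.mp h5 with h6 | h6
      · exact List.mem_cons.mpr (Or.inr (List.mem_filter.mpr ⟨h6, by simpa using hu⟩))
      · exact List.mem_cons.mpr (Or.inl (by simpa using h6))
  have hmem2 : ∀ u, u ∈ l2 ↔ u ∈ T := fun u => (hperm.mem_iff).trans (hmem1 u)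
  have hl1nd : l1.Nodup := List.nodup_cons.mpr ⟨htF0, hF0nd⟩
  have hl2nd : l2.Nodup := hperm.nodup_iff.mpr hl1nd
  have hl1fin : l1.toFinset = T := Finset.ext fun u => by
    rw [List.mem_toFinset]; exact hmem1 u
  have hlen1 : l1.length = T.card := by
    rw [← hl1fin, List.toFinset_card_of_nodup hl1nd]
  have heven1 : Even l1.length := by rw [hlen1]; exact hTeven
  have heven2 : Even l2.length := by rw [hperm.length_eq]; exact heven1
  -- the chain inequality
  have hkey := TJoinAux.chainSum_le_walk hc T w'
  have hfil : s.filter (fun u => decide (u ∈ T)) = l2 := by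
    conv_lhs => rw [hsplit]
    rw [List.filter_append]
    simp [htT]
    rfl
  rw [hfil] at hkey
  have hc1 : TJoinAux.chainSum c (t :: l2)
      = ((TJoinAux.pairs l1).map c).sum + ((TJoinAux.pairs l2).map c).sum := by
    have h6 := TJoinAux.chainSum_eq c (t :: l2)
    rw [List.tail_cons] at h6
    have h7 : TJoinAux.pairs (t :: l2) = TJoinAux.pairs l1 := by
      have h8 : (t :: l2) = l1 ++ [t] := rfl
      rw [h8, TJoinAux.pairs_append l1 [t] heven1]
      simp
    rw [h7] at h6
    exact h6
  -- building a T-join from an even nodup list enumerating T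
  have build : ∀ l : List V, l.Nodup → Even l.length → (∀ u, u ∈ l ↔ u ∈ T) →
      IsTJoin (⊤ : SimpleGraph V) (T : Set V) ((TJoinAux.pairs l).toFinset) ∧
        ∑ e ∈ (TJoinAux.pairs l).toFinset, c e = ((TJoinAux.pairs l).map c).sum := by
    intro l hlnd hlev hlmem
    refine ⟨⟨?_, ?_⟩, ?_⟩
    · intro e he
      rw [SimpleGraph.edgeSet_top]
      simp only [List.coe_toFinset, Set.mem_setOf_eq] at he ⊢
      exact TJoinAux.not_isDiag_of_mem_pairs l hlnd e he
    · intro u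
      rw [TJoinAux.degIn_pairs u l hlnd hlev]
      constructor
      · intro hu
        rw [if_pos ((hlmem u).mpr (by simpa using hu))]
        exact odd_one
      · intro hodd
        by_cases hu : u ∈ l
        · simpa using (hlmem u).mp hu
        · rw [if_neg hu] at hodd
          simp at hodd
    · exact List.sum_toFinset c (TJoinAux.pairs_nodup l hlnd)
  rcases le_total (((TJoinAux.pairs l1).map c).sum) (((TJoinAux.pairs l2).map c).sum) with hle | hle
  · obtain ⟨hj, hsum⟩ := build l1 hl1nd heven1 hmem1
    exact ⟨_, hj, by rw [hsum]; linarith⟩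
  · obtain ⟨hj, hsum⟩ := build l2 hl2nd heven2 hmem2
    exact ⟨_, hj, by rw [hsum]; linarith⟩
end
end

section
/- Let V be a finite set with |V| ≥ 3 and let c be a metric cost on the complete graph over V. Let F be a finite multiset of edges on V (unordered pairs of distinct vertices) such that the multigraph (V,F) is connected, touches every vertex of V, and every vertex has even degree in F (counting multiplicity). Then there exists a Hamiltonian cycle on V whose cost is at most Σ_{e ∈ F} c_e, where the sum counts edges with multiplicity. -/
open scoped Classical

noncomputable section

variable {V : Type*} [Fintype V] [DecidableEq V]

/-- The degree of a vertex in a multiset of edges, counted with multiplicity. -/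
def multiDeg (F : Multiset (Sym2 V)) (v : V) : ℕ :=
  (F.filter fun e => v ∈ e).card

namespace EulerAux

open SimpleGraph Walk

set_option linter.unusedSectionVars false

variable {V : Type} [Fintype V] [DecidableEq V]

lemma multiDeg_cons (e : Sym2 V) (F : Multiset (Sym2 V)) (v : V) :
    multiDeg (e ::ₘ F) v = (if v ∈ e then 1 else 0) + multiDeg F v := by
  rw [multiDeg, multiDeg, Multiset.filter_cons]
  split <;> simp [add_comm]

lemma multiDeg_le {E F : Multiset (Sym2 V)} (h : E ≤ F) (v : V) :
    multiDeg E v ≤ multiDeg F v :=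
  Multiset.card_le_card (Multiset.filter_le_filter _ h)

lemma multiDeg_sub {E F : Multiset (Sym2 V)} (h : E ≤ F) (v : V) :
    multiDeg (F - E) v = multiDeg F v - multiDeg E v := by
  rw [multiDeg, multiDeg, multiDeg, Multiset.filter_sub,
    Multiset.card_sub (Multiset.filter_le_filter _ h)]

lemma multiDeg_pos {F : Multiset (Sym2 V)} {v : V} :
    0 < multiDeg F v ↔ ∃ e ∈ F, v ∈ e := by
  rw [multiDeg, Multiset.card_pos_iff_exists_mem]
  constructor
  · rintro ⟨e, he⟩
    exact ⟨e, (Multiset.mem_filter.mp he).1, (Multiset.mem_filter.mp he).2⟩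
  · rintro ⟨e, he, hv⟩
    exact ⟨e, Multiset.mem_filter.mpr ⟨he, hv⟩⟩

lemma even_walk {a b : V} (w : (⊤ : SimpleGraph V).Walk a b) (x : V) :
    Even (multiDeg (↑w.edges : Multiset (Sym2 V)) x
      + (if x = a then 1 else 0) + (if x = b then 1 else 0)) := by
  induction w with
  | nil =>
      simp only [edges_nil, Multiset.coe_nil, multiDeg, Multiset.filter_zero,
        Multiset.card_zero, zero_add]
      split <;> simp
  | @cons a c b h w ih =>
      have hac : a ≠ c := h.ne
      rw [edges_cons, ← Multiset.cons_coe, multiDeg_cons]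
      simp only [Sym2.mem_iff]
      have hsplit : (if x = a ∨ x = c then 1 else 0)
          = (if x = a then 1 else 0) + (if x = c then 1 else 0) := by
        by_cases h1 : x = a <;> by_cases h2 : x = c <;> simp_all
      rw [hsplit, Nat.even_iff] at *
      split_ifs at ih ⊢ <;> omega

lemma exists_path_multiset :
    ∀ (n : ℕ) (F : Multiset (Sym2 V)), F.card ≤ n →
    (∀ e ∈ F, ¬ e.IsDiag) → ∀ u v : V, u ≠ v →
    (∀ x, Odd (multiDeg F x) ↔ (x = u ∨ x = v)) →
    ∃ w : (⊤ : SimpleGraph V).Walk u v, (↑w.edges : Multiset (Sym2 V)) ≤ F := by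
  intro n
  induction n with
  | zero =>
      intro F hcard _ u v huv hodd
      interval_cases h : F.card
      · rw [Multiset.card_eq_zero] at h
        subst h
        have := (hodd u).mpr (Or.inl rfl)
        simp [multiDeg] at this
  | succ n IH =>
      intro F hcard hdiag u v huv hodd
      have hpos : 0 < multiDeg F u := by
        rcases (hodd u).mpr (Or.inl rfl) with ⟨k, hk⟩
        omega
      obtain ⟨e, heF, hue⟩ := multiDeg_pos.mp hpos
      obtain ⟨y, rfl⟩ := Sym2.mem_iff_exists.mp hue
      have huy : u ≠ y := fun h => hdiag _ heF (Sym2.mk_isDiag_iff.mpr h)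
      by_cases hyv : y = v
      · subst hyv
        refine ⟨Walk.cons (by simp [huy]) Walk.nil, ?_⟩
        simpa using heF
      · -- recurse on F.erase s(u,y)
        set F' := F.erase s(u, y) with hF'
        have hFeq : F = s(u, y) ::ₘ F' := (Multiset.cons_erase heF).symm
        have hdeg : ∀ x, multiDeg F x = (if x ∈ s(u, y) then 1 else 0) + multiDeg F' x := by
          intro x; rw [hFeq, multiDeg_cons]
        have hyu : y ≠ u := Ne.symm huy
        have hvu : v ≠ u := Ne.symm huv
        have hvy : v ≠ y := Ne.symm hyv
        have hodd' : ∀ x, Odd (multiDeg F' x) ↔ (x = y ∨ x = v) := by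
          intro x
          have h1 := hodd x
          have h2 := hdeg x
          simp only [Sym2.mem_iff] at h2
          rw [Nat.odd_iff] at h1 ⊢
          by_cases hxu : x = u <;> by_cases hxy : x = y <;> by_cases hxv : x = v <;>
            simp only [hxu, hxy, hxv, huy, huv, hyv, hyu, hvu, hvy, if_pos, if_neg,
              or_true, true_or, or_false, false_or, or_self, iff_true, iff_false,
              not_false_iff, if_true, if_false, eq_self_iff_true, not_true] at h1 h2 ⊢ <;>
            omega
        have hcard' : F.card = F'.card + 1 := by rw [hFeq]; simp
        obtain ⟨p, hp⟩ := IH F' (by omega)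
          (fun e he => hdiag e (Multiset.mem_of_mem_erase he)) y v hyv hodd'
        refine ⟨Walk.cons (by simp [huy]) p, ?_⟩
        rw [Walk.edges_cons, ← Multiset.cons_coe, hFeq]
        exact Multiset.cons_le_cons _ hp

lemma splice (m : ℕ)
    (IH : ∀ G : Multiset (Sym2 V), G.card ≤ m → (∀ e ∈ G, ¬ e.IsDiag) →
      (∀ x, Even (multiDeg G x)) → ∀ a : V,
      ∃ w : (⊤ : SimpleGraph V).Walk a a, (↑w.edges : Multiset (Sym2 V)) ≤ G ∧
        ∀ e ∈ G - (↑w.edges : Multiset (Sym2 V)), ∀ x ∈ e, x ∉ w.support) :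
    ∀ {a v : V} (t : (⊤ : SimpleGraph V).Walk a v) (G : Multiset (Sym2 V)),
      G.card ≤ m → (∀ e ∈ G, ¬ e.IsDiag) → (∀ x, Even (multiDeg G x)) →
      ∃ (w : (⊤ : SimpleGraph V).Walk a v) (E : Multiset (Sym2 V)),
        (↑w.edges : Multiset (Sym2 V)) = ↑t.edges + E ∧ E ≤ G ∧
        (∀ x ∈ t.support, x ∈ w.support) ∧
        ∀ e ∈ G - E, ∀ x ∈ e, x ∉ w.support := by
  intro a v t
  induction t with
  | nil =>
      intro G hGcard hGdiag hGeven
      obtain ⟨w₀, hle, hsat⟩ := IH G hGcard hGdiag hGeven _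
      refine ⟨w₀, ↑w₀.edges, by simp, hle, ?_, hsat⟩
      intro x hx
      simp only [Walk.support_nil, List.mem_singleton] at hx
      subst hx
      exact w₀.start_mem_support
  | @cons a b v h t' ih =>
      intro G hGcard hGdiag hGeven
      obtain ⟨w₀, hle₀, hsat₀⟩ := IH G hGcard hGdiag hGeven a
      set E₀ : Multiset (Sym2 V) := ↑w₀.edges with hE₀
      have hE₀even : ∀ x, Even (multiDeg E₀ x) := by
        intro x
        obtain ⟨k, hk⟩ := even_walk w₀ x
        rw [← hE₀] at hk
        rw [Nat.even_iff]
        split_ifs at hk <;> omega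
      have hG'card : (G - E₀).card ≤ m := le_trans (Multiset.card_le_card (tsub_le_self)) hGcard
      have hG'diag : ∀ e ∈ G - E₀, ¬ e.IsDiag := fun e he =>
        hGdiag e (Multiset.mem_of_le tsub_le_self he)
      have hG'even : ∀ x, Even (multiDeg (G - E₀) x) := by
        intro x
        rw [multiDeg_sub hle₀]
        have h1 := hGeven x
        have h2 := hE₀even x
        have h3 := multiDeg_le hle₀ x
        rw [Nat.even_iff] at *
        omega
      obtain ⟨w₁, E₁, hedges₁, hle₁, hsup₁, hsat₁⟩ := ih (G - E₀) hG'card hG'diag hG'even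
      refine ⟨w₀.append (Walk.cons h w₁), E₀ + E₁, ?_, ?_, ?_, ?_⟩
      · rw [Walk.edges_append, Walk.edges_cons, ← Multiset.coe_add, ← Multiset.cons_coe,
          hedges₁, Walk.edges_cons, ← Multiset.cons_coe, hE₀]
        simp only [← Multiset.singleton_add]
        abel
      · have h1 : E₁ ≤ G - E₀ := hle₁
        rw [Multiset.le_iff_count] at *
        intro e
        have h2 := h1 e
        have h3 := hle₀ e
        simp only [Multiset.count_sub, Multiset.count_add] at *
        omega
      · intro x hx
        rw [Walk.support_cons] at hx
        rw [Walk.mem_support_append_iff]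
        rcases List.mem_cons.mp hx with rfl | hx
        · exact Or.inl w₀.start_mem_support
        · right
          rw [Walk.support_cons]
          exact List.mem_cons_of_mem _ (hsup₁ x hx)
      · intro e he x hx
        have hsub : G - (E₀ + E₁) = (G - E₀) - E₁ := by
          rw [tsub_add_eq_tsub_tsub]
        rw [hsub] at he
        have he₀ : e ∈ G - E₀ := Multiset.mem_of_le tsub_le_self he
        rw [Walk.mem_support_append_iff, Walk.support_cons]
        push_neg
        refine ⟨hsat₀ e ?_ x hx, ?_⟩
        · exact he₀
        · intro hmem
          rcases List.mem_cons.mp hmem with rfl | hmem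
          · exact hsat₀ e he₀ x hx w₀.end_mem_support
          · exact hsat₁ e he x hx hmem

lemma lemH :
    ∀ (n : ℕ) (F : Multiset (Sym2 V)), F.card ≤ n → (∀ e ∈ F, ¬ e.IsDiag) →
      (∀ x, Even (multiDeg F x)) → ∀ v : V,
      ∃ w : (⊤ : SimpleGraph V).Walk v v, (↑w.edges : Multiset (Sym2 V)) ≤ F ∧
        ∀ e ∈ F - (↑w.edges : Multiset (Sym2 V)), ∀ x ∈ e, x ∉ w.support := by
  intro n
  induction n with
  | zero =>
      intro F hcard hdiag heven v
      have hF0 : F = 0 := by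
        rw [← Multiset.card_eq_zero]; omega
      subst hF0
      exact ⟨Walk.nil, by simp, by simp⟩
  | succ n IH =>
      intro F hcard hdiag heven v
      by_cases hdeg : 0 < multiDeg F v
      · obtain ⟨e, heF, hve⟩ := multiDeg_pos.mp hdeg
        obtain ⟨b, rfl⟩ := Sym2.mem_iff_exists.mp hve
        have hvb : v ≠ b := fun h => hdiag _ heF (Sym2.mk_isDiag_iff.mpr h)
        set F' := F.erase s(v, b) with hF'
        have hFeq : F = s(v, b) ::ₘ F' := (Multiset.cons_erase heF).symm
        have hbv : b ≠ v := Ne.symm hvb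
        have hodd' : ∀ x, Odd (multiDeg F' x) ↔ (x = b ∨ x = v) := by
          intro x
          have h1 := heven x
          have h2 : multiDeg F x = (if x ∈ s(v, b) then 1 else 0) + multiDeg F' x := by
            rw [hFeq, multiDeg_cons]
          simp only [Sym2.mem_iff] at h2
          rw [Nat.even_iff] at h1
          rw [Nat.odd_iff]
          by_cases hxv : x = v <;> by_cases hxb : x = b <;>
            simp only [hxv, hxb, hvb, hbv, if_pos, if_neg, or_true, true_or, or_false,
              false_or, or_self, iff_true, iff_false, not_false_iff, if_true, if_false,
              eq_self_iff_true, not_true] at h1 h2 ⊢ <;>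
            omega
        have hcard' : F.card = F'.card + 1 := by rw [hFeq]; simp
        obtain ⟨p, hp⟩ := exists_path_multiset F'.card F' le_rfl
          (fun e he => hdiag e (Multiset.mem_of_mem_erase he)) b v hbv hodd'
        set t : (⊤ : SimpleGraph V).Walk v v := Walk.cons (by simp [hvb]) p with ht
        have hE₀le : (↑t.edges : Multiset (Sym2 V)) ≤ F := by
          rw [ht, Walk.edges_cons, ← Multiset.cons_coe, hFeq]
          exact Multiset.cons_le_cons _ hp
        set F₁ := F - (↑t.edges : Multiset (Sym2 V)) with hF₁
        have htcard : 1 ≤ (↑t.edges : Multiset (Sym2 V)).card := by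
          rw [ht, Walk.edges_cons, ← Multiset.cons_coe]
          simp
        have hF₁card : F₁.card ≤ n := by
          rw [hF₁, Multiset.card_sub hE₀le]
          omega
        have hF₁diag : ∀ e ∈ F₁, ¬ e.IsDiag := fun e he =>
          hdiag e (Multiset.mem_of_le tsub_le_self he)
        have htEven : ∀ x, Even (multiDeg (↑t.edges : Multiset (Sym2 V)) x) := by
          intro x
          obtain ⟨k, hk⟩ := even_walk t x
          rw [Nat.even_iff]
          split_ifs at hk <;> omega
        have hF₁even : ∀ x, Even (multiDeg F₁ x) := by
          intro x
          rw [hF₁, multiDeg_sub hE₀le]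
          have h1 := heven x
          have h2 := htEven x
          have h3 := multiDeg_le hE₀le x
          rw [Nat.even_iff] at *
          omega
        obtain ⟨w, E, hedges, hle, hsup, hsat⟩ := splice n IH t F₁ hF₁card hF₁diag hF₁even
        refine ⟨w, ?_, ?_⟩
        · rw [hedges]
          have h1 : E ≤ F₁ := hle
          rw [Multiset.le_iff_count] at *
          intro e
          have h2 := h1 e
          have h3 := hE₀le e
          simp only [hF₁, Multiset.count_sub, Multiset.count_add] at *
          omega
        · intro e he x hx
          rw [hedges] at he
          have hsub : F - ((↑t.edges : Multiset (Sym2 V)) + E) = F₁ - E := by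
            rw [hF₁, tsub_add_eq_tsub_tsub]
          rw [hsub] at he
          exact hsat e he x hx
      · refine ⟨Walk.nil, by simp, ?_⟩
        intro e he x hx hmem
        simp only [Walk.support_nil, List.mem_singleton] at hmem
        subst hmem
        exact absurd (multiDeg_pos.mpr ⟨e, by simpa using he, hx⟩) hdeg

lemma walk_cost_ge {c : Sym2 V → ℝ} (hc : IsMetricCost c) :
    ∀ {a b : V} (p : (⊤ : SimpleGraph V).Walk a b), c s(a, b) ≤ (p.edges.map c).sum := by
  intro a b p
  induction p with
  | nil => simp [hc.2.1]
  | @cons a x b h p ih =>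
      rw [Walk.edges_cons]
      simp only [List.map_cons, List.sum_cons]
      calc c s(a, b) ≤ c s(a, x) + c s(x, b) := hc.2.2 a x b
        _ ≤ c s(a, x) + (p.edges.map c).sum := by linarith

lemma shortcut {c : Sym2 V → ℝ} (hc : IsMetricCost c) :
    ∀ {u v : V} (w : (⊤ : SimpleGraph V).Walk u v),
    ∃ (z : V) (p : (⊤ : SimpleGraph V).Walk u z), p.IsPath ∧
      p.support.toFinset = w.support.toFinset ∧
      (p.edges.map c).sum + c s(z, v) ≤ (w.edges.map c).sum := by
  intro u v w
  induction w with
  | nil =>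
      exact ⟨_, Walk.nil, Walk.IsPath.nil, rfl, by simp [hc.2.1]⟩
  | @cons u b v h w' ih =>
      obtain ⟨z, p', hp', hsup, hcost⟩ := ih
      by_cases hu : u ∈ p'.support
      · obtain ⟨p1, p2, rfl⟩ := Walk.mem_support_iff_exists_append.mp hu
        have hp1 : p1.IsPath := hp'.of_append_left
        have hp2 : p2.IsPath := hp'.of_append_right
        have hu' : u ∈ w'.support.toFinset := by
          rw [← hsup]; simpa using hu
        cases p2 with
        | nil =>
            refine ⟨b, p1.reverse, hp1.reverse, ?_, ?_⟩
            · have h1 : p1.reverse.support.toFinset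
                  = (p1.append Walk.nil).support.toFinset := by
                rw [Walk.append_nil, Walk.support_reverse, List.toFinset_reverse]
              rw [h1, hsup, Walk.support_cons, List.toFinset_cons]
              exact (Finset.insert_eq_self.mpr hu').symm
            · rw [Walk.edges_reverse, List.map_reverse, List.sum_reverse, Walk.edges_cons]
              simp only [List.map_cons, List.sum_cons]
              have htri : c s(b, v) ≤ c s(b, u) + c s(u, v) := hc.2.2 b u v
              have hswap : c s(b, u) = c s(u, b) := by rw [Sym2.eq_swap]
              have hp1e : (p1.append Walk.nil).edges = p1.edges := by
                rw [Walk.append_nil]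
              rw [hp1e] at hcost
              linarith
        | @cons u x z h2 p2' =>
            have hnd : (p1.support ++ p2'.support).Nodup := by
              have := hp'.support_nodup
              rwa [Walk.support_append, Walk.support_cons, List.tail_cons] at this
            have hbx : b ≠ x := by
              rcases List.nodup_append'.mp hnd with ⟨-, -, hdisj⟩
              exact fun hbxeq => hdisj p1.start_mem_support (hbxeq ▸ p2'.start_mem_support)
            have hadj : (⊤ : SimpleGraph V).Adj b x := by simp [hbx]
            refine ⟨z, p1.reverse.append (Walk.cons hadj p2'), ?_, ?_, ?_⟩
            · rw [Walk.isPath_def, Walk.support_append, Walk.support_reverse,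
                Walk.support_cons, List.tail_cons]
              rw [List.nodup_append'] at hnd ⊢
              refine ⟨List.nodup_reverse.mpr hnd.1, hnd.2.1, ?_⟩
              intro y hy
              exact hnd.2.2 (List.mem_reverse.mp hy)
            · have h1 : (p1.reverse.append (Walk.cons hadj p2')).support.toFinset
                  = (p1.append (Walk.cons h2 p2')).support.toFinset := by
                ext y
                simp only [List.mem_toFinset, Walk.support_append, Walk.support_reverse,
                  Walk.support_cons, List.tail_cons, List.mem_append, List.mem_reverse]
              rw [h1, hsup, Walk.support_cons, List.toFinset_cons]
              exact (Finset.insert_eq_self.mpr hu').symm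
            · rw [Walk.edges_append, Walk.edges_reverse, Walk.edges_cons]
              have he' : (p1.append (Walk.cons h2 p2')).edges
                  = p1.edges ++ (s(u, x) :: p2'.edges) := by
                rw [Walk.edges_append, Walk.edges_cons]
              rw [he'] at hcost
              simp only [List.map_append, List.sum_append, List.map_reverse,
                List.sum_reverse, List.map_cons, List.sum_cons, Walk.edges_cons] at hcost ⊢
              have htri : c s(b, x) ≤ c s(b, u) + c s(u, x) := hc.2.2 b u x
              have hswap : c s(b, u) = c s(u, b) := by rw [Sym2.eq_swap]
              linarith
      · refine ⟨z, Walk.cons h p', (Walk.cons_isPath_iff h p').mpr ⟨hp', hu⟩, ?_, ?_⟩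
        · rw [Walk.support_cons, List.toFinset_cons, hsup, Walk.support_cons,
            List.toFinset_cons]
        · rw [Walk.edges_cons, Walk.edges_cons]
          simp only [List.map_cons, List.sum_cons]
          linarith

lemma not_edge_of_path {a b : V} {p : (⊤ : SimpleGraph V).Walk a b} (hp : p.IsPath)
    (hl : 2 ≤ p.length) : s(a, b) ∉ p.edges := by
  cases p with
  | nil => simp
  | @cons a x b h p' =>
      intro hmem
      rw [Walk.edges_cons, List.mem_cons] at hmem
      rcases hmem with heq | hmem
      · rw [Sym2.eq_iff] at heq
        rcases heq with ⟨-, rfl⟩ | ⟨rfl, rfl⟩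
        · have hp'' : p' = Walk.nil := (Walk.isPath_iff_eq_nil (p := p')).mp hp.of_cons
          rw [hp''] at hl
          simp at hl
        · exact h.ne rfl
      · exact ((Walk.cons_isPath_iff h p').mp hp).2 (p'.fst_mem_support_of_mem_edges hmem)

lemma euler_exists {F : Multiset (Sym2 V)} (hdiag : ∀ e ∈ F, ¬ e.IsDiag)
    (hconn : (SimpleGraph.fromEdgeSet {e : Sym2 V | e ∈ F}).Connected)
    (heven : ∀ v, Even (multiDeg F v)) (v : V) :
    ∃ w : (⊤ : SimpleGraph V).Walk v v, (↑w.edges : Multiset (Sym2 V)) = F ∧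
      ∀ u : V, u ∈ w.support := by
  obtain ⟨w, hle, hsat⟩ := lemH F.card F le_rfl hdiag heven v
  have hstep : ∀ x y : V, (SimpleGraph.fromEdgeSet {e : Sym2 V | e ∈ F}).Adj x y →
      x ∈ w.support → y ∈ w.support := by
    intro x y hxy hx
    rw [SimpleGraph.fromEdgeSet_adj] at hxy
    by_cases hmem : s(x, y) ∈ w.edges
    · exact w.snd_mem_support_of_mem_edges hmem
    · exfalso
      have hR : s(x, y) ∈ F - (↑w.edges : Multiset (Sym2 V)) := by
        rw [← Multiset.count_pos, Multiset.count_sub]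
        have h1 : 0 < Multiset.count s(x, y) F := Multiset.count_pos.mpr hxy.1
        have h2 : Multiset.count s(x, y) (↑w.edges : Multiset (Sym2 V)) = 0 := by
          rw [Multiset.count_eq_zero]
          simpa using hmem
        omega
      exact hsat _ hR x (Sym2.mem_mk_left x y) hx
  have hwalk : ∀ (x y : V) (_ : (SimpleGraph.fromEdgeSet {e : Sym2 V | e ∈ F}).Walk x y),
      x ∈ w.support → y ∈ w.support := by
    intro x y q
    induction q with
    | nil => exact id
    | cons h q ih => intro hx; exact ih (hstep _ _ h hx)
  have hcover : ∀ u : V, u ∈ w.support := by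
    intro u
    obtain ⟨q⟩ := hconn.preconnected v u
    exact hwalk v u q w.start_mem_support
  have hR0 : F - (↑w.edges : Multiset (Sym2 V)) = 0 := by
    rw [Multiset.eq_zero_iff_forall_notMem]
    intro e he
    exact hsat e he e.out.1 (Sym2.out_fst_mem e) (hcover _)
  have hle' : F ≤ (↑w.edges : Multiset (Sym2 V)) := tsub_eq_zero_iff_le.mp hR0
  exact ⟨w, le_antisymm hle hle', hcover⟩

end EulerAux

set_option linter.unusedVariables false in
/-- Shortcutting an Eulerian multigraph: if the multiset of edges `F` forms a
connected multigraph touching every vertex in which every vertex has even degree,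
then there is a Hamiltonian cycle of cost at most the total cost of `F`
(with multiplicity). -/
theorem exists_ham_le_eulerian {V : Type} [Fintype V] [DecidableEq V]
    (c : Sym2 V → ℝ) (hc : IsMetricCost c) (hn : 3 ≤ Fintype.card V)
    (F : Multiset (Sym2 V)) (hFdiag : ∀ e ∈ F, ¬ e.IsDiag)
    (hconn : (SimpleGraph.fromEdgeSet {e : Sym2 V | e ∈ F}).Connected)
    (htouch : ∀ v : V, ∃ e ∈ F, v ∈ e)
    (heven : ∀ v : V, Even (multiDeg F v)) :
    ∃ (v : V) (w : (⊤ : SimpleGraph V).Walk v v), w.IsHamiltonianCycle ∧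
      (w.edges.map c).sum ≤ (F.map c).sum := by
  
  have hnonempty : Nonempty V := Fintype.card_pos_iff.mp (by omega)
  obtain ⟨v⟩ := hnonempty
  obtain ⟨w₀, hEdges, hcover⟩ := EulerAux.euler_exists hFdiag hconn heven v
  obtain ⟨z, p, hp, hsupF, hcost⟩ := EulerAux.shortcut hc w₀
  have hw₀univ : w₀.support.toFinset = Finset.univ :=
    Finset.eq_univ_iff_forall.mpr fun u => List.mem_toFinset.mpr (hcover u)
  have hpuniv : p.support.toFinset = Finset.univ := by rw [hsupF, hw₀univ]
  have hpnodup := hp.support_nodup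
  have hlensup : p.support.length = Fintype.card V := by
    rw [← List.toFinset_card_of_nodup hpnodup, hpuniv, Finset.card_univ]
  have hlen2 : p.support.length = p.length + 1 := SimpleGraph.Walk.length_support p
  have hplen : 2 ≤ p.length := by omega
  have hzv : z ≠ v := by
    rintro rfl
    have hnil := (SimpleGraph.Walk.isPath_iff_eq_nil (p := p)).mp hp
    rw [hnil] at hplen
    simp at hplen
  have hadj : (⊤ : SimpleGraph V).Adj v z := by simp [Ne.symm hzv]
  have hCc : (SimpleGraph.Walk.cons hadj p.reverse).IsCycle := by
    rw [SimpleGraph.Walk.cons_isCycle_iff]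
    refine ⟨hp.reverse, ?_⟩
    rw [SimpleGraph.Walk.edges_reverse, List.mem_reverse]
    exact EulerAux.not_edge_of_path hp hplen
  refine ⟨v, SimpleGraph.Walk.cons hadj p.reverse, ?_, ?_⟩
  · rw [SimpleGraph.Walk.isHamiltonianCycle_iff_isCycle_and_support_count_tail_eq_one]
    refine ⟨hCc, fun a => ?_⟩
    rw [SimpleGraph.Walk.support_cons, List.tail_cons, SimpleGraph.Walk.support_reverse]
    refine List.count_eq_one_of_mem (List.nodup_reverse.mpr hpnodup)
      (List.mem_reverse.mpr ?_)
    exact List.mem_toFinset.mp (by rw [hpuniv]; exact Finset.mem_univ a)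
  · have hsum : (List.map c w₀.edges).sum = (F.map c).sum := by
      rw [← hEdges]
      simp
    rw [SimpleGraph.Walk.edges_cons, List.map_cons, List.sum_cons,
      SimpleGraph.Walk.edges_reverse, List.map_reverse, List.sum_reverse]
    have hswap : c s(v, z) = c s(z, v) := by rw [Sym2.eq_swap]
    linarith [hcost, hsum]
end
end

section
/- Let V be a finite set with |V| ≥ 3 and let c be a metric cost on the complete graph over V. Let M be a spanning tree of the complete graph over V, let T be the set of vertices having odd degree in M, and let J be a T-join of the complete graph over V. Then there exists a Hamiltonian cycle on V whose cost is at most the cost of M plus the cost of J. -/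
open scoped Classical

noncomputable section

variable {V : Type*} [Fintype V] [DecidableEq V]

set_option linter.unusedSectionVars false
set_option maxHeartbeats 1000000



namespace ChristofidesAux

variable {V : Type*} [DecidableEq V]

def zipE : List V → List (Sym2 V)
  | [] => []
  | [_] => []
  | a :: b :: l => s(a, b) :: zipE (b :: l)

def eMS (l : List V) : Multiset (Sym2 V) := (zipE l : List (Sym2 V))

def mdeg (E : Multiset (Sym2 V)) (v : V) : ℕ := Multiset.card (E.filter (v ∈ ·))

lemma zipE_cons (a b : V) (l : List V) : zipE (a :: b :: l) = s(a, b) :: zipE (b :: l) := rfl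

lemma eMS_cons (a b : V) (l : List V) : eMS (a :: b :: l) = s(a, b) ::ₘ eMS (b :: l) := rfl

lemma mem_of_mem_zipE : ∀ {l : List V} {e : Sym2 V}, e ∈ zipE l → ∀ {x : V}, x ∈ e → x ∈ l
  | [], e, he, x, hx => by simp [zipE] at he
  | [_], e, he, x, hx => by simp [zipE] at he
  | a :: b :: l, e, he, x, hx => by
    rw [zipE_cons, List.mem_cons] at he
    rcases he with rfl | he
    · rcases Sym2.mem_iff.1 hx with rfl | rfl <;> simp
    · exact List.mem_cons_of_mem _ (mem_of_mem_zipE he hx)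

lemma zipE_append : ∀ (A : List V) (b : V) (B : List V),
    zipE (A ++ b :: B) = zipE (A ++ [b]) ++ zipE (b :: B)
  | [], b, B => by simp [zipE]
  | [a], b, B => by simp [zipE]
  | a :: a' :: A, b, B => by
    have := zipE_append (a' :: A) b B
    simp only [List.cons_append, zipE_cons] at *
    rw [this]

lemma mdeg_add (A B : Multiset (Sym2 V)) (v : V) : mdeg (A + B) v = mdeg A v + mdeg B v := by
  simp [mdeg, Multiset.filter_add]

lemma mdeg_cons (e : Sym2 V) (F : Multiset (Sym2 V)) (v : V) :
    mdeg (e ::ₘ F) v = (if v ∈ e then 1 else 0) + mdeg F v := by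
  simp only [mdeg, Multiset.filter_cons]
  split_ifs <;> simp <;> omega

lemma mdeg_sub {A B : Multiset (Sym2 V)} (h : B ≤ A) (v : V) :
    mdeg (A - B) v = mdeg A v - mdeg B v := by
  have := mdeg_add (A - B) B v
  rw [tsub_add_cancel_of_le h] at this
  omega

lemma exists_edge_of_mdeg_pos {F : Multiset (Sym2 V)} {v : V} (h : 0 < mdeg F v) :
    ∃ e ∈ F, v ∈ e := by
  rw [mdeg, Multiset.card_pos] at h
  obtain ⟨e, he⟩ := Multiset.exists_mem_of_ne_zero h
  rw [Multiset.mem_filter] at he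
  exact ⟨e, he.1, he.2⟩

lemma mdeg_parity : ∀ (l : List V), (∀ e ∈ zipE l, ¬ e.IsDiag) → ∀ x : V,
    (mdeg (eMS l) x + (if l.head? = some x then 1 else 0)
      + (if l.getLast? = some x then 1 else 0)) % 2 = 0
  | [], _, x => by simp [eMS, zipE, mdeg]
  | [a], _, x => by
    simp only [eMS, zipE, mdeg]
    by_cases h : a = x <;> simp [h]
  | a :: b :: l, hd, x => by
    have hab : a ≠ b := by
      have := hd s(a, b) (by rw [zipE_cons]; exact List.mem_cons_self)
      simpa [Sym2.mk_isDiag_iff] using this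
    have ih := mdeg_parity (b :: l)
      (fun e he => hd e (by rw [zipE_cons]; exact List.mem_cons_of_mem _ he)) x
    rw [eMS_cons, mdeg_cons]
    have h1 : (if x ∈ s(a, b) then 1 else 0) =
        (if x = a then 1 else 0) + (if x = b then 1 else 0) := by
      by_cases hxa : x = a
      · have hxb : x ≠ b := fun h => hab (hxa.symm.trans h)
        simp [Sym2.mem_iff, hxa, hxb, hab]
      · by_cases hxb : x = b <;> simp [Sym2.mem_iff, hxa, hxb, hab.symm]
    have h2 : ((a :: b :: l).head? = some x) = (x = a) := by
      simp [eq_comm]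
    have h3 : ((a :: b :: l).getLast? = some x) = ((b :: l).getLast? = some x) := by
      rw [List.getLast?_cons_cons]
    have h4 : ((b :: l).head? = some x) = (x = b) := by
      simp [eq_comm]
    simp only [h4] at ih
    simp only [h1, h2, h3]
    omega

def costL (c : Sym2 V → ℝ) (l : List V) : ℝ := ((zipE l).map c).sum

lemma costL_nonneg {c : Sym2 V → ℝ} (hc : ∀ e, 0 ≤ c e) (l : List V) : 0 ≤ costL c l := by
  apply List.sum_nonneg
  intro x hx
  obtain ⟨e, _, rfl⟩ := List.mem_map.1 hx
  exact hc e

lemma costL_cons (c : Sym2 V → ℝ) (a b : V) (l : List V) :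
    costL c (a :: b :: l) = c s(a, b) + costL c (b :: l) := rfl

lemma costL_eq_sum (c : Sym2 V → ℝ) (l : List V) : costL c l = ((eMS l).map c).sum := by
  simp [costL, eMS]

lemma key_sublist {c : Sym2 V → ℝ} (hc : IsMetricCost c) :
    ∀ (l : List V) {d : List V} {x y : V} (a : V), List.Sublist (x :: d) (y :: l) →
      (x :: d).getLast? = (y :: l).getLast? →
      c s(a, x) + costL c (x :: d) ≤ c s(a, y) + costL c (y :: l) := by
  intro l
  induction l with
  | nil =>
    intro d x y a h hlast
    have hd : d = [] := by
      have := h.length_le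
      simp only [List.length_cons, List.length_nil] at this
      exact List.eq_nil_of_length_eq_zero (by omega)
    subst hd
    have hxy : x = y := by simpa using h.subset (List.mem_cons_self : x ∈ [x])
    subst hxy
    exact le_rfl
  | cons z l' ih =>
    intro d x y a h hlast
    cases h with
    | cons _ h' =>
      have hlast' : (x :: d).getLast? = (z :: l').getLast? := by
        rw [hlast, List.getLast?_cons_cons]
      have hih := ih (a := y) h' hlast'
      have htri : c s(a, x) ≤ c s(a, y) + c s(y, x) := hc.2.2 a y x
      rw [costL_cons]
      linarith
    | cons_cons _ h' =>
      cases d with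
      | nil =>
        have h0 : costL c ([x] : List V) = 0 := by simp [costL, zipE]
        have h1 : 0 ≤ costL c (x :: z :: l') := costL_nonneg hc.1 _
        rw [h0]
        linarith
      | cons x' d' =>
        have hlast' : (x' :: d').getLast? = (z :: l').getLast? := by
          rw [List.getLast?_cons_cons, List.getLast?_cons_cons] at hlast
          exact hlast
        have hih := ih (a := x) h' hlast'
        rw [costL_cons, costL_cons]
        linarith

lemma eMS_cons_head {a w : V} {l' : List V} (h : l'.head? = some w) :
    eMS (a :: l') = s(a, w) ::ₘ eMS l' := by
  cases l' with
  | nil => simp at h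
  | cons b l => rw [List.head?_cons, Option.some_inj] at h; subst h; rfl

lemma getLast?_cons_of_ne_nil {a : V} {l : List V} (h : l ≠ []) :
    (a :: l).getLast? = l.getLast? := by
  cases l with
  | nil => exact absurd rfl h
  | cons b l => rw [List.getLast?_cons_cons]

lemma exists_trail_odd : ∀ (n : ℕ) (F : Multiset (Sym2 V)), Multiset.card F ≤ n →
    (∀ e ∈ F, ¬ e.IsDiag) → ∀ y : V, Odd (mdeg F y) →
    ∃ (z : V) (l : List V), z ≠ y ∧ Odd (mdeg F z) ∧ l.head? = some y ∧
      l.getLast? = some z ∧ eMS l ≤ F := by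
  intro n
  induction n with
  | zero =>
    intro F hcard _ y hodd
    interval_cases h : Multiset.card F
    rw [Multiset.card_eq_zero] at h
    subst h
    simp [mdeg] at hodd
  | succ n ih =>
    intro F hcard hdiag y hodd
    have hpos : 0 < mdeg F y := hodd.pos
    obtain ⟨e, heF, hye⟩ := exists_edge_of_mdeg_pos hpos
    obtain ⟨w, rfl⟩ := Sym2.mem_iff_exists.1 hye
    have hwy : w ≠ y := by
      intro h; subst h
      exact hdiag _ heF (by simp [Sym2.mk_isDiag_iff])
    set F' := F.erase s(y, w) with hF'
    have hFeq : s(y, w) ::ₘ F' = F := Multiset.cons_erase heF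
    have hdegy : mdeg F y = 1 + mdeg F' y := by
      rw [← hFeq, mdeg_cons]; simp
    have hdegw : mdeg F w = 1 + mdeg F' w := by
      rw [← hFeq, mdeg_cons]; simp [Sym2.mem_iff]
    by_cases hw : Odd (mdeg F w)
    · refine ⟨w, [y, w], hwy, hw, rfl, rfl, ?_⟩
      have : eMS [y, w] = s(y, w) ::ₘ 0 := rfl
      rw [this]
      simpa using heF
    · have hodd' : Odd (mdeg F' w) := by
        rw [Nat.odd_iff] at *
        omega
      have hcard' : Multiset.card F' ≤ n := by
        have : Multiset.card F = Multiset.card F' + 1 := by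
          rw [← hFeq]; simp
        omega
      have hdiag' : ∀ e ∈ F', ¬ e.IsDiag := fun e he =>
        hdiag e (Multiset.mem_of_le (Multiset.erase_le _ _) he)
      obtain ⟨z, l', hzw, hzodd, hh, hl, hle⟩ := ih F' hcard' hdiag' w hodd'
      have hzy : z ≠ y := by
        intro h; subst h
        rw [Nat.odd_iff] at hodd hzodd
        omega
      have hzodd2 : Odd (mdeg F z) := by
        have : mdeg F z = (if z ∈ s(y, w) then 1 else 0) + mdeg F' z := by
          rw [← hFeq, mdeg_cons]
        rw [this, if_neg]
        · simpa using hzodd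
        · simp only [Sym2.mem_iff]
          rintro (rfl | rfl)
          · exact hzy rfl
          · exact hzw rfl
      refine ⟨z, y :: l', hzy, hzodd2, rfl, ?_, ?_⟩
      · rw [getLast?_cons_of_ne_nil (by rintro rfl; simp at hh)]
        exact hl
      · rw [eMS_cons_head hh, ← hFeq]
        exact Multiset.cons_le_cons _ hle

lemma exists_closed_trail (F : Multiset (Sym2 V)) (hdiag : ∀ e ∈ F, ¬ e.IsDiag)
    (hev : ∀ v, Even (mdeg F v)) {x w : V} (he : s(x, w) ∈ F) :
    ∃ t : List V, t.head? = some x ∧ t.getLast? = some x ∧ eMS t ≤ F ∧ eMS t ≠ 0 := by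
  have hxw : x ≠ w := by
    intro h; subst h; exact hdiag _ he (by simp [Sym2.mk_isDiag_iff])
  set F' := F.erase s(x, w) with hF'
  have hFeq : s(x, w) ::ₘ F' = F := Multiset.cons_erase he
  have hdegw : mdeg F w = 1 + mdeg F' w := by
    rw [← hFeq, mdeg_cons]; simp [Sym2.mem_iff]
  have hodd' : Odd (mdeg F' w) := by
    have := hev w
    rw [Nat.even_iff] at this
    rw [Nat.odd_iff]
    omega
  have hdiag' : ∀ e ∈ F', ¬ e.IsDiag := fun e h =>
    hdiag e (Multiset.mem_of_le (Multiset.erase_le _ _) h)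
  obtain ⟨z, l', hzw, hzodd, hh, hl, hle⟩ :=
    exists_trail_odd (Multiset.card F') F' le_rfl hdiag' w hodd'
  have hzx : z = x := by
    by_contra hzx
    have : mdeg F z = (if z ∈ s(x, w) then 1 else 0) + mdeg F' z := by
      rw [← hFeq, mdeg_cons]
    rw [if_neg (by simp only [Sym2.mem_iff]; rintro (rfl | rfl); exacts [hzx rfl, hzw rfl])] at this
    have := hev z
    rw [Nat.even_iff] at this
    rw [Nat.odd_iff] at hzodd
    omega
  subst hzx
  refine ⟨z :: l', rfl, ?_, ?_, ?_⟩
  · rw [getLast?_cons_of_ne_nil (by rintro rfl; simp at hh)]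
    exact hl
  · rw [eMS_cons_head hh, ← hFeq]
    exact Multiset.cons_le_cons _ hle
  · rw [eMS_cons_head hh]
    simp

lemma eMS_append (A : List V) (b : V) (B : List V) :
    eMS (A ++ b :: B) = eMS (A ++ [b]) + eMS (b :: B) := by
  simp only [eMS, zipE_append A b B]
  rw [← Multiset.coe_add]

lemma getLast?_append_right {A B : List V} (h : B ≠ []) :
    (A ++ B).getLast? = B.getLast? := by
  rw [List.getLast?_append]
  cases hB : B.getLast? with
  | none => exact absurd (List.getLast?_eq_none_iff.1 hB) h
  | some b => rfl

lemma eMS_append_of_getLast {t : List V} {x : V} (h : t.getLast? = some x) (b : V) (B : List V) :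
    eMS (t ++ b :: B) = eMS t + eMS (x :: b :: B) := by
  have hsplit : t.dropLast ++ [x] = t := List.dropLast_append_getLast? x h
  rw [← hsplit, List.append_assoc, List.singleton_append, eMS_append t.dropLast x (b :: B)]

lemma splice {W t : List V} {v x : V} (hW1 : W.head? = some v) (hW2 : W.getLast? = some v)
    (hx : x ∈ W) (ht1 : t.head? = some x) (ht2 : t.getLast? = some x) :
    ∃ W₂ : List V, W₂.head? = some v ∧ W₂.getLast? = some v ∧ eMS W₂ = eMS W + eMS t := by
  obtain ⟨A, B, rfl⟩ := List.append_of_mem hx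
  obtain ⟨t₁, rfl⟩ : ∃ t₁, t = x :: t₁ := by
    cases t with
    | nil => simp at ht1
    | cons a t₁ => rw [List.head?_cons, Option.some_inj] at ht1; exact ⟨t₁, by rw [ht1]⟩
  refine ⟨A ++ ((x :: t₁) ++ B), ?_, ?_, ?_⟩
  · cases A with
    | nil =>
      simp only [List.nil_append] at hW1 ⊢
      cases B <;> simpa using hW1
    | cons a A => simpa using (by simpa using hW1 : a = v)
  · cases B with
    | nil =>
      simp only [List.append_nil] at hW2 ⊢
      rw [getLast?_append_right (by simp : (x :: t₁ : List V) ≠ [])]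
      rw [getLast?_append_right (by simp : ([x] : List V) ≠ [])] at hW2
      simp only [List.getLast?_singleton] at hW2
      rw [ht2, hW2]
    | cons b B =>
      rw [getLast?_append_right (A := A) (B := (x :: t₁) ++ (b :: B)) (by simp),
          getLast?_append_right (A := x :: t₁) (B := b :: B) (by simp)]
      rw [getLast?_append_right (A := A) (B := x :: b :: B) (by simp),
          List.getLast?_cons_cons] at hW2
      exact hW2
  · cases B with
    | nil =>
      simp only [List.append_nil]
      have h1 : eMS (A ++ x :: t₁) = eMS (A ++ [x]) + eMS (x :: t₁) := eMS_append A x t₁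
      rw [h1]
    | cons b B =>
      calc eMS (A ++ ((x :: t₁) ++ (b :: B)))
          = eMS (A ++ [x]) + eMS ((x :: t₁) ++ (b :: B)) := eMS_append A x (t₁ ++ b :: B)
        _ = eMS (A ++ [x]) + (eMS (x :: t₁) + eMS (x :: b :: B)) := by
            rw [eMS_append_of_getLast ht2]
        _ = (eMS (A ++ [x]) + eMS (x :: b :: B)) + eMS (x :: t₁) := by abel
        _ = eMS (A ++ x :: b :: B) + eMS (x :: t₁) := by rw [← eMS_append A x (b :: B)]

lemma euler (E : Multiset (Sym2 V)) (hdiag : ∀ e ∈ E, ¬ e.IsDiag)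
    (hev : ∀ u, Even (mdeg E u)) (v : V)
    (hconn : ∀ w, (∃ e ∈ E, w ∈ e) → Relation.ReflTransGen (fun a b => s(a, b) ∈ E) v w) :
    ∃ l : List V, l.head? = some v ∧ l.getLast? = some v ∧ eMS l = E := by
  classical
  set P : ℕ → Prop := fun n => ∃ l : List V, l.head? = some v ∧ l.getLast? = some v ∧
    eMS l ≤ E ∧ Multiset.card (eMS l) = n with hP
  have hP0 : P 0 := ⟨[v], rfl, rfl, by simp [eMS, zipE], by simp [eMS, zipE]⟩
  set N := Nat.findGreatest P (Multiset.card E) with hN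
  have hPN : P N := Nat.findGreatest_spec (Nat.zero_le _) hP0
  obtain ⟨W, hW1, hW2, hWle, hWcard⟩ := hPN
  by_cases heq : eMS W = E
  · exact ⟨W, hW1, hW2, heq⟩
  set F := E - eMS W with hF
  have hEW : eMS W + F = E := add_tsub_cancel_of_le hWle
  have hFle : F ≤ E := tsub_le_self
  have hF0 : F ≠ 0 := by
    intro h
    exact heq (by rw [← hEW, h, add_zero])
  have hvW : v ∈ W := by
    cases W with
    | nil => simp at hW1
    | cons a W => simp only [List.head?_cons, Option.some_inj] at hW1; simp [hW1]
  have htouch : ∃ x ∈ W, ∃ e ∈ F, x ∈ e := by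
    by_contra hno
    push_neg at hno
    have hreach : ∀ w, Relation.ReflTransGen (fun a b => s(a, b) ∈ E) v w → w ∈ W := by
      intro w hw
      induction hw with
      | refl => exact hvW
      | tail hab hbc ih =>
        rename_i b cc
        by_cases hmem : s(b, cc) ∈ eMS W
        · exact mem_of_mem_zipE hmem (Sym2.mem_mk_right _ _)
        · refine absurd (Sym2.mem_mk_left b cc) (hno b ih s(b, cc) ?_)
          rw [hF, ← Multiset.count_pos, Multiset.count_sub]
          have h1 : 0 < Multiset.count s(b, cc) E := Multiset.count_pos.2 hbc
          have h2 : Multiset.count s(b, cc) (eMS W) = 0 := Multiset.count_eq_zero.2 hmem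
          omega
    obtain ⟨e, heF⟩ := Multiset.exists_mem_of_ne_zero hF0
    induction e using Sym2.ind with
    | _ a b =>
      have haW : a ∈ W := hreach a (hconn a ⟨s(a, b), Multiset.mem_of_le hFle heF,
        Sym2.mem_mk_left _ _⟩)
      exact hno a haW s(a, b) heF (Sym2.mem_mk_left _ _)
  obtain ⟨x, hxW, e, heF, hxe⟩ := htouch
  have hFdiag : ∀ e ∈ F, ¬ e.IsDiag := fun e he => hdiag e (Multiset.mem_of_le hFle he)
  have hWdiag : ∀ e ∈ zipE W, ¬ e.IsDiag := by
    intro e he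
    exact hdiag e (Multiset.mem_of_le hWle he)
  have hWev : ∀ u, Even (mdeg (eMS W) u) := by
    intro u
    have := mdeg_parity W hWdiag u
    rw [hW1, hW2] at this
    rw [Nat.even_iff]
    by_cases hu : v = u <;> simp only [hu, if_pos, if_neg, Option.some_inj] at this <;> omega
  have hFev : ∀ u, Even (mdeg F u) := by
    intro u
    have h1 := hev u
    have h2 := hWev u
    rw [hF, mdeg_sub hWle]
    rw [Nat.even_iff] at *
    have : mdeg (eMS W) u ≤ mdeg E u := by
      have := mdeg_add (eMS W) F u
      rw [hEW] at this
      omega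
    omega
  obtain ⟨w, rfl⟩ := Sym2.mem_iff_exists.1 hxe
  obtain ⟨t, ht1, ht2, htle, htne⟩ := exists_closed_trail F hFdiag hFev heF
  obtain ⟨W₂, h21, h22, h2e⟩ := splice hW1 hW2 hxW ht1 ht2
  have hle2 : eMS W₂ ≤ E := by
    rw [h2e, ← hEW]
    exact add_le_add_right htle _
  have hcard2 : Multiset.card (eMS W₂) ≤ Multiset.card E := Multiset.card_le_card hle2
  have hle : Multiset.card (eMS W₂) ≤ N :=
    Nat.le_findGreatest hcard2 ⟨W₂, h21, h22, hle2, rfl⟩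
  have hgt : N < Multiset.card (eMS W₂) := by
    rw [h2e, Multiset.card_add, hWcard]
    have : 0 < Multiset.card (eMS t) := Multiset.card_pos.2 htne
    omega
  omega

lemma dedup_getLast? : ∀ (l : List V), l ≠ [] → l.dedup.getLast? = l.getLast?
  | [], h => absurd rfl h
  | [a], _ => by simp
  | a :: b :: l, _ => by
    by_cases ha : a ∈ b :: l
    · rw [List.dedup_cons_of_mem ha, List.getLast?_cons_cons,
        dedup_getLast? (b :: l) (by simp)]
    · rw [List.dedup_cons_of_notMem ha, List.getLast?_cons_cons]
      have hne : (b :: l).dedup ≠ [] := by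
        intro h
        have : b ∈ (b :: l).dedup := List.mem_dedup.2 (by simp)
        rw [h] at this
        simp at this
      rw [getLast?_cons_of_ne_nil hne, dedup_getLast? (b :: l) (by simp)]

lemma chain_top_of_nodup : ∀ (a : V) (t : List V), (a :: t).Nodup →
    List.Chain (⊤ : SimpleGraph V).Adj a t
  | _, [], _ => List.Chain.nil
  | a, b :: t, h => by
    have hab : a ≠ b := by
      intro hab
      exact (List.nodup_cons.1 h).1 (hab ▸ (List.mem_cons_self : b ∈ b :: t))
    exact List.Chain.cons (by simp [hab]) (chain_top_of_nodup b t (List.nodup_cons.1 h).2)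

def mkW (G : SimpleGraph V) : (l : List V) → (a b : V) → List.Chain G.Adj a (l ++ [b]) → G.Walk a b
  | [], _, _, h => SimpleGraph.Walk.cons (List.chain_cons.mp h).1 SimpleGraph.Walk.nil
  | x :: l, a, b, h =>
    SimpleGraph.Walk.cons (List.chain_cons.mp h).1 (mkW G l x b (List.chain_cons.mp h).2)

lemma mkW_support (G : SimpleGraph V) : ∀ (l : List V) (a b : V) (h : List.Chain G.Adj a (l ++ [b])),
    (mkW G l a b h).support = a :: (l ++ [b])
  | [], a, b, h => rfl
  | x :: l, a, b, h => by
    simp only [mkW, SimpleGraph.Walk.support_cons, mkW_support G l x b]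
    exact congrArg (a :: ·) (mkW_support G l x b _)

lemma mkW_edges (G : SimpleGraph V) : ∀ (l : List V) (a b : V) (h : List.Chain G.Adj a (l ++ [b])),
    (mkW G l a b h).edges = zipE (a :: (l ++ [b]))
  | [], a, b, h => rfl
  | x :: l, a, b, h => by
    simp only [mkW, SimpleGraph.Walk.edges_cons, mkW_edges G l x b]
    exact congrArg (s(a, x) :: ·) (mkW_edges G l x b _)

end ChristofidesAux

/-- Given a spanning tree `M` of the metric complete graph and a `T`-join `J` for
`T` the odd-degree vertices of `M`, there is a Hamiltonian cycle of cost at most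
the cost of `M` plus the cost of `J`. -/
theorem exists_ham_le_tree_add_tjoin {V : Type} [Fintype V] [DecidableEq V]
    (c : Sym2 V → ℝ) (hc : IsMetricCost c) (hn : 3 ≤ Fintype.card V)
    (M : Finset (Sym2 V)) (hM : IsSpanningTree (⊤ : SimpleGraph V) M)
    (T : Set V) (hT : T = {v | Odd (degIn M v)})
    (J : Finset (Sym2 V)) (hJ : IsTJoin (⊤ : SimpleGraph V) T J) :
    ∃ (v : V) (w : (⊤ : SimpleGraph V).Walk v v), w.IsHamiltonianCycle ∧
      (w.edges.map c).sum ≤ ∑ e ∈ M, c e + ∑ e ∈ J, c e := by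
  classical
  obtain ⟨hM1, hM2⟩ := hM
  obtain ⟨hJ1, hJ2⟩ := hJ
  obtain ⟨hc0, hcdiag, hctri⟩ := hc
  set E : Multiset (Sym2 V) := M.val + J.val with hE
  have hMsubE : ∀ e ∈ M, e ∈ E := fun e he => Multiset.mem_add.2 (Or.inl he)
  have hdiag : ∀ e ∈ E, ¬ e.IsDiag := by
    intro e he
    rcases Multiset.mem_add.1 he with h | h
    · have := hM1 (show e ∈ (M : Set (Sym2 V)) by exact_mod_cast h)
      rw [SimpleGraph.edgeSet_top] at this
      exact this
    · have := hJ1 (show e ∈ (J : Set (Sym2 V)) by exact_mod_cast h)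
      rw [SimpleGraph.edgeSet_top] at this
      exact this
  have hdegM : ∀ u, ChristofidesAux.mdeg M.val u = degIn M u := fun u => rfl
  have hdegJ : ∀ u, ChristofidesAux.mdeg J.val u = degIn J u := fun u => rfl
  have hev : ∀ u, Even (ChristofidesAux.mdeg E u) := by
    intro u
    rw [hE, ChristofidesAux.mdeg_add, hdegM, hdegJ]
    have hiff : Odd (degIn M u) ↔ Odd (degIn J u) := by
      rw [← hJ2 u, hT]
      exact Iff.rfl
    rw [Nat.even_add, ← Nat.not_odd_iff_even, ← Nat.not_odd_iff_even]
    tauto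
  have hVpos : 0 < Fintype.card V := by omega
  obtain ⟨v₀⟩ : Nonempty V := Fintype.card_pos_iff.mp hVpos
  have hconnG : (SimpleGraph.fromEdgeSet (M : Set (Sym2 V))).Connected := hM2.isConnected
  have hstep : ∀ a b : V, (SimpleGraph.fromEdgeSet (M : Set (Sym2 V))).Adj a b → s(a, b) ∈ E := by
    intro a b hab
    rw [SimpleGraph.fromEdgeSet_adj] at hab
    exact hMsubE _ (by exact_mod_cast hab.1)
  have hreach : ∀ (u w : V), Relation.ReflTransGen (fun a b => s(a, b) ∈ E) u w := by
    intro u w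
    obtain ⟨p⟩ := hconnG.preconnected u w
    induction p with
    | nil => exact Relation.ReflTransGen.refl
    | cons h p ih => exact Relation.ReflTransGen.head (hstep _ _ h) ih
  obtain ⟨l, hl1, hl2, hlE⟩ :=
    ChristofidesAux.euler E hdiag hev v₀ (fun w _ => hreach v₀ w)
  have hcover : ∀ u : V, u ∈ l := by
    intro u
    obtain ⟨w, hw⟩ := Fintype.exists_ne_of_one_lt_card (by omega) u
    obtain ⟨p⟩ := hconnG.preconnected u w
    cases p with
    | nil => exact absurd rfl hw
    | @cons _ x _ h p =>
      have hmem : s(u, x) ∈ ChristofidesAux.eMS l := by rw [hlE]; exact hstep _ _ h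
      exact ChristofidesAux.mem_of_mem_zipE hmem (Sym2.mem_mk_left _ _)
  have hlne : l ≠ [] := by rintro rfl; simp at hl1
  set d := l.dedup with hd
  have hdnd : d.Nodup := l.nodup_dedup
  have hdsub : List.Sublist d l := l.dedup_sublist
  have hdlast : d.getLast? = some v₀ := by
    rw [hd, ChristofidesAux.dedup_getLast? l hlne]; exact hl2
  have hdmem : ∀ u : V, u ∈ d := fun u => List.mem_dedup.2 (hcover u)
  have hdlen : d.length = Fintype.card V := by
    have huniv : d.toFinset = Finset.univ :=
      Finset.eq_univ_iff_forall.2 (fun u => List.mem_toFinset.2 (hdmem u))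
    rw [← List.toFinset_card_of_nodup hdnd, huniv, Finset.card_univ]
  obtain ⟨u, rest, hdu⟩ : ∃ u rest, d = u :: rest := by
    cases hdd : d with
    | nil => rw [hdd] at hdlen; simp at hdlen; omega
    | cons u rest => exact ⟨u, rest, rfl⟩
  have hrestlast : rest.getLast? = some v₀ := by
    have hrne : rest ≠ [] := by
      rintro rfl
      rw [hdu] at hdlen; simp at hdlen; omega
    rw [hdu, ChristofidesAux.getLast?_cons_of_ne_nil hrne] at hdlast
    exact hdlast
  have hrne : rest ≠ [] := by rintro rfl; simp at hrestlast
  set mid := rest.dropLast with hmid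
  have hrest_eq : mid ++ [v₀] = rest := List.dropLast_append_getLast? v₀ hrestlast
  have hchain : List.Chain (⊤ : SimpleGraph V).Adj u (mid ++ [v₀]) := by
    rw [hrest_eq]
    exact ChristofidesAux.chain_top_of_nodup u rest (hdu ▸ hdnd)
  set p := ChristofidesAux.mkW (⊤ : SimpleGraph V) mid u v₀ hchain with hp
  have hsup : p.support = d := by
    rw [hp, ChristofidesAux.mkW_support, hrest_eq, hdu]
  have hedges : p.edges = ChristofidesAux.zipE d := by
    rw [hp, ChristofidesAux.mkW_edges, hrest_eq, hdu]
  have hpPath : p.IsPath := by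
    rw [SimpleGraph.Walk.isPath_def, hsup]; exact hdnd
  have huNotRest : u ∉ rest := by
    have := hdu ▸ hdnd
    exact (List.nodup_cons.1 this).1
  have hv₀rest : v₀ ∈ rest := by
    rw [← hrest_eq]; simp
  have hune : v₀ ≠ u := fun h => huNotRest (h ▸ hv₀rest)
  have hadj : (⊤ : SimpleGraph V).Adj v₀ u := by simp [hune]
  have hnotin : s(v₀, u) ∉ p.edges := by
    rw [hedges, hdu]
    obtain ⟨r1, rest', rfl⟩ : ∃ r1 rest', rest = r1 :: rest' := by
      cases rest with
      | nil => exact absurd rfl hrne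
      | cons r1 rest' => exact ⟨r1, rest', rfl⟩
    have hrest'ne : rest' ≠ [] := by
      rintro rfl
      rw [hdu] at hdlen
      simp at hdlen
      omega
    have hv₀rest' : v₀ ∈ rest' := by
      rw [ChristofidesAux.getLast?_cons_of_ne_nil hrest'ne] at hrestlast
      obtain ⟨hh, heq⟩ := List.mem_getLast?_eq_getLast hrestlast
      exact heq ▸ List.getLast_mem hh
    have hr1v₀ : r1 ≠ v₀ := by
      intro h
      have : r1 ∉ rest' := by
        have := hdu ▸ hdnd
        exact (List.nodup_cons.1 (List.nodup_cons.1 this).2).1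
      exact this (h ▸ hv₀rest')
    rw [ChristofidesAux.zipE_cons]
    intro hmem
    rcases List.mem_cons.1 hmem with heq | hmem'
    · rcases Sym2.eq_iff.1 heq with ⟨h1, _⟩ | ⟨h1, _⟩
      · exact hune h1
      · exact hr1v₀ h1.symm
    · have : u ∈ r1 :: rest' :=
        ChristofidesAux.mem_of_mem_zipE hmem' (Sym2.mem_mk_right _ _)
      exact huNotRest this
  set cyc := SimpleGraph.Walk.cons hadj p with hcyc
  have hcycIsCycle : cyc.IsCycle :=
    SimpleGraph.Path.cons_isCycle ⟨p, hpPath⟩ hadj hnotin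
  have hham : cyc.IsHamiltonianCycle := by
    rw [SimpleGraph.Walk.isHamiltonianCycle_iff_isCycle_and_support_count_tail_eq_one]
    refine ⟨hcycIsCycle, ?_⟩
    intro a
    have : cyc.support.tail = d := by
      rw [hcyc, SimpleGraph.Walk.support_cons, List.tail_cons, hsup]
    rw [this]
    exact List.count_eq_one_of_mem hdnd (hdmem a)
  refine ⟨v₀, cyc, hham, ?_⟩
  have hcedges : cyc.edges = s(v₀, u) :: p.edges := by
    rw [hcyc, SimpleGraph.Walk.edges_cons]
  obtain ⟨lt, hlt⟩ : ∃ lt, l = v₀ :: lt := by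
    cases l with
    | nil => exact absurd rfl hlne
    | cons a lt =>
      rw [List.head?_cons, Option.some_inj] at hl1
      exact ⟨lt, by rw [hl1]⟩
  have hkey : c s(v₀, u) + ChristofidesAux.costL c d ≤
      c s(v₀, v₀) + ChristofidesAux.costL c l := by
    rw [hdu, hlt]
    exact ChristofidesAux.key_sublist ⟨hc0, hcdiag, hctri⟩ lt v₀
      (by rw [← hdu, ← hlt]; exact hdsub)
      (by rw [← hdu, ← hlt, hdlast, hl2])
  have hcostl : ChristofidesAux.costL c l = ∑ e ∈ M, c e + ∑ e ∈ J, c e := by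
    rw [ChristofidesAux.costL_eq_sum, hlE, hE, Multiset.map_add, Multiset.sum_add]
    rfl
  have hsum : (cyc.edges.map c).sum = c s(v₀, u) + ChristofidesAux.costL c d := by
    rw [hcedges, List.map_cons, List.sum_cons, hedges]
    rfl
  rw [hsum, hcdiag v₀] at *
  linarith [hkey]
end
end

section
/- Let G = (V,E) be a finite connected undirected graph with nonnegative edge costs c : E → ℝ≥0, and let T ⊆ V be a nonempty set of even cardinality. Then the minimum cost of a T-join of G equals the minimum cost of a perfect matching in the complete graph on vertex set T, where the cost of an edge {s,t} of that complete graph is the shortest-path distance from s to t in G (the minimum total cost of a walk in G from s to t). -/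
open scoped Classical

noncomputable section

variable {V : Type*} [Fintype V] [DecidableEq V]

/-- The shortest-path distance between the two endpoints of the pair `e`:
the infimum of the total cost of a walk in `G` between them. -/
def spDist (G : SimpleGraph V) (c : Sym2 V → ℝ) (e : Sym2 V) : ℝ :=
  sInf {t | ∃ u v, e = s(u, v) ∧ ∃ p : G.Walk u v, t = (p.edges.map c).sum}

/-- `P` is a perfect matching of the complete graph on the vertex set `T`:
a set of unordered pairs of distinct vertices of `T` such that every vertex of
`T` lies in exactly one pair. -/
def IsPerfectMatchingOn (T : Finset V) (P : Finset (Sym2 V)) : Prop :=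
  (∀ e ∈ P, ¬e.IsDiag ∧ ∀ v ∈ e, v ∈ T) ∧
    ∀ v ∈ T, (P.filter fun e => v ∈ e).card = 1

open scoped symmDiff

set_option linter.unusedSectionVars false

/-- Auxiliary: degree mod 2. -/
def degZ (M : Finset (Sym2 V)) (v : V) : ZMod 2 :=
  ∑ e ∈ M, if v ∈ e then 1 else 0

lemma odd_iff_cast {n : ℕ} : Odd n ↔ (n : ZMod 2) = 1 := by
  rw [Nat.odd_iff, ← ZMod.natCast_mod n 2]
  rcases Nat.mod_two_eq_zero_or_one n with h | h <;> rw [h] <;> simp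

lemma degZ_eq (M : Finset (Sym2 V)) (v : V) : degZ M v = (degIn M v : ZMod 2) := by
  simp [degZ, degIn, Finset.sum_boole]

lemma odd_degIn_iff (M : Finset (Sym2 V)) (v : V) : Odd (degIn M v) ↔ degZ M v = 1 := by
  rw [degZ_eq, odd_iff_cast]

lemma zmod_add_self (x : ZMod 2) : x + x = 0 := by
  have h2 : (2 : ZMod 2) = 0 := rfl
  rw [← two_mul, h2, zero_mul]

lemma degZ_sdiff {Q J : Finset (Sym2 V)} (h : Q ⊆ J) (v : V) :
    degZ (J \ Q) v = degZ J v + degZ Q v := by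
  have h1 := Finset.sum_sdiff (f := fun e => if v ∈ e then (1 : ZMod 2) else 0) h
  unfold degZ
  rw [← h1, add_assoc, zmod_add_self, add_zero]

lemma degZ_symmDiff (A B : Finset (Sym2 V)) (v : V) :
    degZ (A ∆ B) v = degZ A v + degZ B v := by
  have hA : degZ (A \ (A ∩ B)) v = degZ A v + degZ (A ∩ B) v :=
    degZ_sdiff Finset.inter_subset_left v
  have hB : degZ (B \ (A ∩ B)) v = degZ B v + degZ (A ∩ B) v :=
    degZ_sdiff Finset.inter_subset_right v
  have hU : A ∆ B = (A \ (A ∩ B)) ∪ (B \ (A ∩ B)) := by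
    rw [Finset.sdiff_inter_self_left, Finset.inter_comm, Finset.sdiff_inter_self_left]
    rfl
  have hdisj : Disjoint (A \ (A ∩ B)) (B \ (A ∩ B)) := by
    rw [Finset.sdiff_inter_self_left, Finset.inter_comm, Finset.sdiff_inter_self_left]
    exact disjoint_sdiff_sdiff
  have hsum : degZ (A ∆ B) v = degZ (A \ (A ∩ B)) v + degZ (B \ (A ∩ B)) v := by
    rw [hU]; exact Finset.sum_union hdisj
  rw [hsum, hA, hB]
  have h0 := zmod_add_self (degZ (A ∩ B) v)
  abel_nf
  abel_nf at h0
  rw [h0, zero_add]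

lemma walk_degZ {H : SimpleGraph V} {a b : V} (p : H.Walk a b) (hp : p.edges.Nodup) (w : V) :
    degZ p.edges.toFinset w = (if w = a then 1 else 0) + (if w = b then 1 else 0) := by
  induction p with
  | nil =>
    simp only [SimpleGraph.Walk.edges_nil, List.toFinset_nil]
    have h0 : degZ (∅ : Finset (Sym2 V)) w = 0 := Finset.sum_empty
    rw [h0]
    split_ifs <;> simp [zmod_add_self]
  | @cons x y z h q ih =>
    rw [SimpleGraph.Walk.edges_cons] at hp ⊢
    rw [List.nodup_cons] at hp
    rw [List.toFinset_cons]
    have hnm : s(x, y) ∉ q.edges.toFinset := by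
      rw [List.mem_toFinset]; exact hp.1
    have hins : degZ (insert s(x,y) q.edges.toFinset) w
        = (if w ∈ s(x,y) then 1 else 0) + degZ q.edges.toFinset w :=
      Finset.sum_insert hnm
    rw [hins, ih hp.2]
    have hxy : x ≠ y := h.ne
    simp only [Sym2.mem_iff]
    rcases eq_or_ne w x with rfl | h1 <;> rcases eq_or_ne w y with rfl | h2 <;>
      rcases eq_or_ne w z with rfl | h3 <;> simp_all <;> decide

lemma sum_list_toFinset_le (c : Sym2 V → ℝ) :
    ∀ l : List (Sym2 V), (∀ e ∈ l, 0 ≤ c e) → ∑ e ∈ l.toFinset, c e ≤ (l.map c).sum := by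
  intro l
  induction l with
  | nil => simp
  | cons a l ih =>
    intro h
    rw [List.toFinset_cons, List.map_cons, List.sum_cons]
    have hrest := ih fun e he => h e (List.mem_cons_of_mem _ he)
    by_cases ha : a ∈ l.toFinset
    · rw [Finset.insert_eq_self.mpr ha]
      have := h a List.mem_cons_self
      linarith
    · rw [Finset.sum_insert ha]
      linarith

lemma walk_cost_nonneg {G : SimpleGraph V} (c : Sym2 V → ℝ) (hc : ∀ e ∈ G.edgeSet, 0 ≤ c e)
    {u v : V} (p : G.Walk u v) : 0 ≤ (p.edges.map c).sum := by
  refine List.sum_nonneg ?_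
  intro x hx
  obtain ⟨e, he, rfl⟩ := List.mem_map.mp hx
  exact hc e (p.edges_subset_edgeSet he)

lemma spDist_bddBelow (G : SimpleGraph V) (c : Sym2 V → ℝ) (hc : ∀ e ∈ G.edgeSet, 0 ≤ c e)
    (e : Sym2 V) :
    BddBelow {t | ∃ u v, e = s(u, v) ∧ ∃ p : G.Walk u v, t = (p.edges.map c).sum} := by
  refine ⟨0, ?_⟩
  rintro x ⟨u, v, -, p, rfl⟩
  exact walk_cost_nonneg c hc p

lemma spDist_nonneg (G : SimpleGraph V) (c : Sym2 V → ℝ) (hc : ∀ e ∈ G.edgeSet, 0 ≤ c e)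
    (e : Sym2 V) : 0 ≤ spDist G c e := by
  refine Real.sInf_nonneg ?_
  rintro x ⟨u, v, -, p, rfl⟩
  exact walk_cost_nonneg c hc p

lemma spDist_le (G : SimpleGraph V) (c : Sym2 V → ℝ) (hc : ∀ e ∈ G.edgeSet, 0 ≤ c e)
    {u v : V} (p : G.Walk u v) : spDist G c s(u, v) ≤ (p.edges.map c).sum :=
  csInf_le (spDist_bddBelow G c hc _) ⟨u, v, rfl, p, rfl⟩

lemma exists_matching : ∀ (n : ℕ) (T : Finset V), T.card = n → Even n →
    ∃ P, IsPerfectMatchingOn T P := by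
  intro n
  induction n using Nat.strong_induction_on with
  | _ n ih =>
    intro T hcard heven
    rcases T.eq_empty_or_nonempty with rfl | ⟨u, hu⟩
    · exact ⟨∅, by simp [IsPerfectMatchingOn], by simp⟩
    · have h1 : 1 ≤ T.card := Finset.card_pos.mpr ⟨u, hu⟩
      have h2 : 2 ≤ T.card := by
        rcases heven with ⟨k, hk⟩; omega
      have hne : (T.erase u).Nonempty := by
        rw [← Finset.card_pos, Finset.card_erase_of_mem hu]; omega
      obtain ⟨v, hv⟩ := hne
      have hvu : v ≠ u := Finset.ne_of_mem_erase hv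
      have hvT : v ∈ T := Finset.mem_of_mem_erase hv
      set T' := (T.erase u).erase v with hT'
      have hT'card : T'.card = n - 2 := by
        rw [hT', Finset.card_erase_of_mem hv, Finset.card_erase_of_mem hu]; omega
      have hmemT' : ∀ w, w ∈ T' ↔ w ∈ T ∧ w ≠ u ∧ w ≠ v := by
        intro w
        simp only [hT', Finset.mem_erase]
        tauto
      obtain ⟨P', hP'⟩ := ih (n - 2) (by omega) T' hT'card (by rcases heven with ⟨k, hk⟩; exact ⟨k - 1, by omega⟩)
      refine ⟨insert s(u, v) P', ?_, ?_⟩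
      · intro e he
        rcases Finset.mem_insert.mp he with rfl | he'
        · constructor
          · rw [Sym2.mk_isDiag_iff]; exact fun h => hvu h.symm
          · intro w hw
            rcases Sym2.mem_iff.mp hw with rfl | rfl
            · exact hu
            · exact hvT
        · obtain ⟨hd, hsub⟩ := hP'.1 e he'
          exact ⟨hd, fun w hw => ((hmemT' w).mp (hsub w hw)).1⟩
      · intro w hw
        have hnotin : s(u, v) ∉ P' := by
          intro hmem
          have := (hP'.1 _ hmem).2 u (by simp)
          exact ((hmemT' u).mp this).2.1 rfl
        by_cases hwe : w ∈ s(u, v)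
        · have hfilP' : P'.filter (fun e => w ∈ e) = ∅ := by
            rw [Finset.filter_eq_empty_iff]
            intro e he
            intro hwmem
            have := ((hmemT' w).mp ((hP'.1 e he).2 w hwmem)).2
            rcases Sym2.mem_iff.mp hwe with rfl | rfl
            · exact this.1 rfl
            · exact this.2 rfl
          rw [Finset.filter_insert, if_pos hwe, hfilP']
          simp
        · have hwT' : w ∈ T' := by
            rw [hmemT']
            refine ⟨hw, ?_, ?_⟩ <;> rintro rfl <;> exact hwe (by simp)
          rw [Finset.filter_insert, if_neg hwe]
          exact hP'.2 w hwT'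

-- key partner lemma
lemma exists_partner (G : SimpleGraph V) (J : Finset (Sym2 V)) (T : Finset V)
    (hJT : IsTJoin G (↑T) J) {s : V} (hs : s ∈ T) :
    ∃ t ∈ T, t ≠ s ∧ ∃ q : (SimpleGraph.fromEdgeSet (↑J : Set (Sym2 V))).Walk s t,
      q.edges.Nodup := by
  set H := SimpleGraph.fromEdgeSet (↑J : Set (Sym2 V)) with hH
  have hnodiag : ∀ e ∈ J, ¬e.IsDiag := by
    intro e he
    exact (SimpleGraph.not_isDiag_of_mem_edgeSet G (hJT.1 he))
  have hdegT : ∀ v : V, degZ J v = if v ∈ T then 1 else 0 := by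
    intro v
    have := hJT.2 v
    rw [odd_degIn_iff] at this
    by_cases hv : v ∈ T
    · simp only [if_pos hv]; exact this.mp (by exact_mod_cast hv)
    · simp only [if_neg hv]
      have h1 : degZ J v ≠ 1 := fun h => hv (by exact_mod_cast this.mpr h)
      have : ∀ x : ZMod 2, x ≠ 1 → x = 0 := by decide
      exact this _ h1
  set R : Finset V := Finset.univ.filter (fun v => H.Reachable s v) with hR
  have hsR : s ∈ R := Finset.mem_filter.mpr ⟨Finset.mem_univ s, SimpleGraph.Reachable.refl s⟩
  -- sum over R of degZ is zero
  have hkey : ∑ v ∈ R, degZ J v = 0 := by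
    unfold degZ
    rw [Finset.sum_comm]
    refine Finset.sum_eq_zero ?_
    intro e he
    obtain ⟨a, b, rfl⟩ : ∃ a b, e = s(a, b) := Sym2.inductionOn e fun a b => ⟨a, b, rfl⟩
    have hab : a ≠ b := by
      intro h; exact hnodiag _ he (by rw [Sym2.mk_isDiag_iff]; exact h)
    have hadj : H.Adj a b := by
      rw [hH, SimpleGraph.fromEdgeSet_adj]
      exact ⟨by exact_mod_cast he, hab⟩
    have hiff : a ∈ R ↔ b ∈ R := by
      simp only [hR, Finset.mem_filter, Finset.mem_univ, true_and]
      exact ⟨fun r => r.trans hadj.reachable, fun r => r.trans hadj.symm.reachable⟩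
    have hsplit : ∀ v, (if v ∈ s(a, b) then (1 : ZMod 2) else 0)
        = (if v = a then 1 else 0) + (if v = b then 1 else 0) := by
      intro v
      simp only [Sym2.mem_iff]
      rcases eq_or_ne v a with rfl | h1 <;> rcases eq_or_ne v b with rfl | h2 <;>
        simp_all
    calc ∑ v ∈ R, (if v ∈ s(a, b) then (1 : ZMod 2) else 0)
        = ∑ v ∈ R, ((if v = a then (1:ZMod 2) else 0) + (if v = b then 1 else 0)) := by
          exact Finset.sum_congr rfl fun v _ => hsplit v
      _ = (if a ∈ R then (1:ZMod 2) else 0) + (if b ∈ R then 1 else 0) := by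
          rw [Finset.sum_add_distrib, Finset.sum_ite_eq' R a (fun _ => (1:ZMod 2)),
            Finset.sum_ite_eq' R b (fun _ => (1:ZMod 2))]
      _ = 0 := by
          by_cases haR : a ∈ R
          · rw [if_pos haR, if_pos (hiff.mp haR)]; exact zmod_add_self 1
          · rw [if_neg haR, if_neg (fun hbR => haR (hiff.mpr hbR))]; exact zero_add 0
  have hcount : ((R.filter (fun v => v ∈ T)).card : ZMod 2) = 0 := by
    have h1 : (∑ v ∈ R, degZ J v) = ((R.filter (fun v => v ∈ T)).card : ZMod 2) := by
      rw [Finset.sum_congr rfl fun v _ => hdegT v]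
      exact Finset.sum_boole _ _
    rw [← h1]; exact hkey
  have heven : (2 : ℕ) ∣ (R.filter (fun v => v ∈ T)).card := by
    rwa [ZMod.natCast_eq_zero_iff] at hcount
  have hsfil : s ∈ R.filter (fun v => v ∈ T) := Finset.mem_filter.mpr ⟨hsR, hs⟩
  have hcard2 : 1 < (R.filter (fun v => v ∈ T)).card := by
    have h1 : 1 ≤ (R.filter (fun v => v ∈ T)).card := Finset.card_pos.mpr ⟨s, hsfil⟩
    rcases heven with ⟨k, hk⟩; omega
  obtain ⟨t, htfil, hts⟩ := Finset.exists_mem_ne hcard2 s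
  rw [Finset.mem_filter] at htfil
  refine ⟨t, htfil.2, hts, ?_⟩
  have hreach : H.Reachable s t := by
    have := htfil.1
    rw [hR, Finset.mem_filter] at this
    exact this.2
  obtain ⟨p₀⟩ := hreach
  exact ⟨p₀.bypass, p₀.bypass_isPath.edges_nodup⟩

lemma tjoin_to_matching (G : SimpleGraph V) (c : Sym2 V → ℝ)
    (hc : ∀ e ∈ G.edgeSet, 0 ≤ c e) (J : Finset (Sym2 V)) :
    ∀ T : Finset V, IsTJoin G (↑T) J →
      ∃ P, IsPerfectMatchingOn T P ∧ ∑ e ∈ P, spDist G c e ≤ ∑ e ∈ J, c e := by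
  induction J using Finset.strongInduction with
  | _ J ih =>
    intro T hJT
    rcases T.eq_empty_or_nonempty with rfl | ⟨s, hs⟩
    · refine ⟨∅, ⟨by simp, by simp⟩, ?_⟩
      rw [Finset.sum_empty]
      exact Finset.sum_nonneg fun e he => hc e (hJT.1 he)
    · obtain ⟨t, htT, hts, q, hqnd⟩ := exists_partner G J T hJT hs
      have hqJ : ∀ e ∈ q.edges, e ∈ J := by
        intro e he
        have := q.edges_subset_edgeSet he
        rw [SimpleGraph.edgeSet_fromEdgeSet] at this
        exact_mod_cast this.1
      set Q := q.edges.toFinset with hQ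
      have hQJ : Q ⊆ J := fun e he => hqJ e (List.mem_toFinset.mp he)
      have hQne : Q.Nonempty := by
        have : q.edges ≠ [] := by
          intro h
          have h0 : q.length = 0 := by
            have := congrArg List.length h
            rwa [SimpleGraph.Walk.length_edges] at this
          exact hts (SimpleGraph.Walk.eq_of_length_eq_zero h0).symm
        obtain ⟨e, he⟩ := List.exists_mem_of_ne_nil _ this
        exact ⟨e, List.mem_toFinset.mpr he⟩
      have hss : J \ Q ⊂ J := Finset.sdiff_ssubset hQJ hQne
      set T' := (T.erase s).erase t with hT'
      have hmemT' : ∀ w, w ∈ T' ↔ w ∈ T ∧ w ≠ s ∧ w ≠ t := by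
        intro w; simp only [hT', Finset.mem_erase]; tauto
      have hJT' : IsTJoin G (↑T') (J \ Q) := by
        constructor
        · intro e he
          exact hJT.1 (Finset.mem_coe.mpr (Finset.mem_sdiff.mp (Finset.mem_coe.mp he)).1)
        · intro v
          rw [Finset.mem_coe, odd_degIn_iff, degZ_sdiff hQJ, hQ, walk_degZ q hqnd]
          have hvT := hJT.2 v
          rw [Finset.mem_coe (s := T)] at hvT
          rw [odd_degIn_iff] at hvT
          have hdeg01 : ∀ x : ZMod 2, x = 0 ∨ x = 1 := by decide
          rw [hmemT']
          rcases eq_or_ne v s with rfl | h1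
          · have hd : degZ J v = 1 := hvT.mp hs
            simp only [hd, if_pos rfl, if_neg (fun h : v = t => hts h.symm)]
            constructor
            · rintro ⟨-, h, -⟩; exact absurd rfl h
            · intro h; exact absurd h (by decide)
          · rcases eq_or_ne v t with rfl | h2
            · have hd : degZ J v = 1 := hvT.mp htT
              simp only [hd, if_neg h1, if_pos rfl]
              constructor
              · rintro ⟨-, -, h⟩; exact absurd rfl h
              · intro h; exact absurd h (by decide)
            · simp only [if_neg h1, if_neg h2, add_zero]
              constructor
              · rintro ⟨h, -, -⟩; exact hvT.mp h
              · intro h; exact ⟨hvT.mpr h, h1, h2⟩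
      obtain ⟨P', hP', hle'⟩ := ih (J \ Q) hss T' hJT'
      have hsT' : s ∉ T' := by rw [hmemT']; tauto
      have htT' : t ∉ T' := by rw [hmemT']; tauto
      have hstP' : s(s, t) ∉ P' := by
        intro h
        exact hsT' ((hP'.1 _ h).2 s (by simp))
      refine ⟨insert s(s, t) P', ⟨?_, ?_⟩, ?_⟩
      · intro e he
        rcases Finset.mem_insert.mp he with rfl | he'
        · refine ⟨by rw [Sym2.mk_isDiag_iff]; exact fun h => hts h.symm, ?_⟩
          intro w hw
          rcases Sym2.mem_iff.mp hw with rfl | rfl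
          · exact hs
          · exact htT
        · obtain ⟨hd, hsub⟩ := hP'.1 e he'
          exact ⟨hd, fun w hw => ((hmemT' w).mp (hsub w hw)).1⟩
      · intro w hw
        by_cases hwe : w ∈ s(s, t)
        · have hfil : P'.filter (fun e => w ∈ e) = ∅ := by
            rw [Finset.filter_eq_empty_iff]
            intro e he hwmem
            have := (hmemT' w).mp ((hP'.1 e he).2 w hwmem)
            rcases Sym2.mem_iff.mp hwe with rfl | rfl
            · exact this.2.1 rfl
            · exact this.2.2 rfl
          rw [Finset.filter_insert, if_pos hwe, hfil]
          simp
        · have hwT' : w ∈ T' := by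
            rw [hmemT']
            refine ⟨hw, ?_, ?_⟩ <;> rintro rfl <;> exact hwe (by simp)
          rw [Finset.filter_insert, if_neg hwe]
          exact hP'.2 w hwT'
      · -- cost bound
        have hqG : ∀ e ∈ q.edges, e ∈ G.edgeSet := fun e he =>
          hJT.1 (Finset.mem_coe.mpr (hqJ e he))
        have hsp : spDist G c s(s, t) ≤ ∑ e ∈ Q, c e := by
          have h1 : spDist G c s(s, t) ≤ ((q.transfer G hqG).edges.map c).sum :=
            csInf_le (spDist_bddBelow G c hc _) ⟨s, t, rfl, q.transfer G hqG, rfl⟩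
          rwa [SimpleGraph.Walk.edges_transfer, ← List.sum_toFinset c hqnd] at h1
        have hsplit : ∑ e ∈ J \ Q, c e + ∑ e ∈ Q, c e = ∑ e ∈ J, c e :=
          Finset.sum_sdiff hQJ
        rw [Finset.sum_insert hstP']
        linarith

lemma symmDiff_subset_union' (A B : Finset (Sym2 V)) : A ∆ B ⊆ A ∪ B := by
  intro x hx
  rw [Finset.mem_symmDiff] at hx
  rw [Finset.mem_union]
  tauto

lemma matching_to_tjoin (G : SimpleGraph V) (hG : G.Connected) (c : Sym2 V → ℝ)
    (hc : ∀ e ∈ G.edgeSet, 0 ≤ c e) (P : Finset (Sym2 V)) :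
    ∀ T : Finset V, IsPerfectMatchingOn T P → ∀ ε : ℝ, 0 < ε →
      ∃ J, IsTJoin G (↑T) J ∧ ∑ e ∈ J, c e ≤ ∑ e ∈ P, spDist G c e + ε := by
  induction P using Finset.strongInduction with
  | _ P ih =>
    intro T hP ε hε
    rcases P.eq_empty_or_nonempty with rfl | ⟨e, heP⟩
    · have hT : T = ∅ := by
        by_contra h
        obtain ⟨v, hv⟩ := Finset.nonempty_of_ne_empty h
        have := hP.2 v hv
        simp at this
      subst hT
      refine ⟨∅, ⟨by simp, ?_⟩, by simp; linarith⟩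
      intro v
      simp [degIn]
    · obtain ⟨u, v, rfl⟩ : ∃ a b, e = s(a, b) := Sym2.inductionOn e fun a b => ⟨a, b, rfl⟩
      have huv : u ≠ v := by
        have := (hP.1 _ heP).1
        rw [Sym2.mk_isDiag_iff] at this
        exact this
      have huT : u ∈ T := (hP.1 _ heP).2 u (by simp)
      have hvT : v ∈ T := (hP.1 _ heP).2 v (by simp)
      set P' := P.erase s(u, v) with hP'def
      have hss : P' ⊂ P := Finset.erase_ssubset heP
      set T' := (T.erase u).erase v with hT'
      have hmemT' : ∀ w, w ∈ T' ↔ w ∈ T ∧ w ≠ u ∧ w ≠ v := by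
        intro w; simp only [hT', Finset.mem_erase]; tauto
      have hcover : ∀ w ∈ s(u, v), ∀ e' ∈ P', w ∉ e' := by
        intro w hwuv e' he' hwe'
        have he'P : e' ∈ P := Finset.mem_of_mem_erase he'
        have hwT : w ∈ T := by
          rcases Sym2.mem_iff.mp hwuv with rfl | rfl
          · exact huT
          · exact hvT
        have h1 := hP.2 w hwT
        have hne : s(u, v) ≠ e' := by
          intro h; rw [← h] at he'; exact (Finset.notMem_erase _ _) he'
        have hsub2 : ({s(u, v), e'} : Finset (Sym2 V)) ⊆ P.filter (fun e => w ∈ e) := by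
          intro x hx
          rcases Finset.mem_insert.mp hx with rfl | hx
          · exact Finset.mem_filter.mpr ⟨heP, hwuv⟩
          · rw [Finset.mem_singleton] at hx
            subst hx
            exact Finset.mem_filter.mpr ⟨he'P, hwe'⟩
        have h2 : 2 ≤ (P.filter (fun e => w ∈ e)).card := by
          calc 2 = ({s(u, v), e'} : Finset (Sym2 V)).card := by
                rw [Finset.card_insert_of_notMem (by simpa using hne), Finset.card_singleton]
            _ ≤ _ := Finset.card_le_card hsub2
        omega
      have hP'm : IsPerfectMatchingOn T' P' := by
        constructor
        · intro e' he'
          have he'P : e' ∈ P := Finset.mem_of_mem_erase he'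
          obtain ⟨hd, hsub⟩ := hP.1 e' he'P
          refine ⟨hd, fun w hw => ?_⟩
          rw [hmemT']
          refine ⟨hsub w hw, fun h => ?_, fun h => ?_⟩
          · exact hcover w (by rw [h]; simp) e' he' hw
          · exact hcover w (by rw [h]; simp) e' he' hw
        · intro w hw
          rw [hmemT'] at hw
          have hwe : w ∉ s(u, v) := by
            rw [Sym2.mem_iff]
            push_neg
            exact ⟨hw.2.1, hw.2.2⟩
          have hfil : P'.filter (fun e => w ∈ e) = P.filter (fun e => w ∈ e) := by
            rw [hP'def, Finset.filter_erase]
            rw [Finset.erase_eq_of_notMem]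
            intro h
            exact hwe (Finset.mem_filter.mp h).2
          rw [hfil]
          exact hP.2 w hw.1
      obtain ⟨J', hJ'T', hle'⟩ := ih P' hss T' hP'm (ε / 2) (by linarith)
      have hSne : {t | ∃ a b, s(u, v) = s(a, b) ∧ ∃ p : G.Walk a b, t = (p.edges.map c).sum}.Nonempty := by
        obtain ⟨p₀⟩ := hG.preconnected u v
        exact ⟨(p₀.edges.map c).sum, u, v, rfl, p₀, rfl⟩
      obtain ⟨x, hxS, hxlt⟩ := Real.lt_sInf_add_pos hSne (show (0:ℝ) < ε / 2 by linarith)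
      obtain ⟨a, b, hab, p, rfl⟩ := hxS
      have habuv : (u = a ∧ v = b) ∨ (u = b ∧ v = a) := Sym2.eq_iff.mp hab
      have habne : a ≠ b := by rcases habuv with ⟨rfl, rfl⟩ | ⟨rfl, rfl⟩ <;> [exact huv; exact fun h => huv h.symm]
      have haT : a ∈ T := by rcases habuv with ⟨rfl, rfl⟩ | ⟨rfl, rfl⟩ <;> [exact huT; exact hvT]
      have hbT : b ∈ T := by rcases habuv with ⟨rfl, rfl⟩ | ⟨rfl, rfl⟩ <;> [exact hvT; exact huT]
      have hmemT'' : ∀ w, w ∈ T' ↔ w ∈ T ∧ w ≠ a ∧ w ≠ b := by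
        intro w
        rw [hmemT']
        rcases habuv with ⟨rfl, rfl⟩ | ⟨rfl, rfl⟩ <;> tauto
      set q := p.bypass with hq
      have hqnd : q.edges.Nodup := p.bypass_isPath.edges_nodup
      set Q := q.edges.toFinset with hQdef
      set J := J' ∆ Q with hJ
      have hQG : ∀ e' ∈ Q, e' ∈ G.edgeSet := by
        intro e' he'
        exact q.edges_subset_edgeSet (List.mem_toFinset.mp he')
      have hJsub : ∀ e' ∈ J, e' ∈ G.edgeSet := by
        intro e' he'
        rcases Finset.mem_union.mp (symmDiff_subset_union' J' Q he') with h | h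
        · exact hJ'T'.1 (Finset.mem_coe.mpr h)
        · exact hQG e' h
      refine ⟨J, ⟨fun e' he' => hJsub e' (Finset.mem_coe.mp he'), ?_⟩, ?_⟩
      · intro w
        rw [Finset.mem_coe, odd_degIn_iff, hJ, degZ_symmDiff, hQdef, walk_degZ q hqnd]
        have hw' := hJ'T'.2 w
        rw [Finset.mem_coe, odd_degIn_iff] at hw'
        have hd01 : ∀ x : ZMod 2, x = 0 ∨ x = 1 := by decide
        have hJ'w : degZ J' w = if w ∈ T' then 1 else 0 := by
          by_cases h : w ∈ T'
          · rw [if_pos h]; exact hw'.mp h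
          · rw [if_neg h]
            rcases hd01 (degZ J' w) with h0 | h1
            · exact h0
            · exact absurd (hw'.mpr h1) h
        rw [hJ'w]
        rcases eq_or_ne w a with rfl | h1
        · have hnT' : w ∉ T' := by rw [hmemT'']; tauto
          simp only [if_neg hnT', if_pos rfl, if_neg habne, zero_add, add_zero]
          exact ⟨fun _ => rfl, fun _ => haT⟩
        · rcases eq_or_ne w b with rfl | h2
          · have hnT' : w ∉ T' := by rw [hmemT'']; tauto
            simp only [if_neg hnT', if_neg h1, if_pos rfl, zero_add]
            exact ⟨fun _ => rfl, fun _ => hbT⟩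
          · simp only [if_neg h1, if_neg h2, add_zero]
            by_cases h : w ∈ T
            · rw [if_pos (by rw [hmemT'']; exact ⟨h, h1, h2⟩)]
              exact ⟨fun _ => rfl, fun _ => h⟩
            · rw [if_neg (fun hh => h ((hmemT'' w).mp hh).1)]
              exact ⟨fun hh => absurd hh h, fun hh => absurd hh (by decide)⟩
      · have hJ'G : ∀ e' ∈ J', e' ∈ G.edgeSet := fun e' he' => hJ'T'.1 (Finset.mem_coe.mpr he')
        have h1 : ∑ e' ∈ J, c e' ≤ ∑ e' ∈ J' ∪ Q, c e' := by
          refine Finset.sum_le_sum_of_subset_of_nonneg (symmDiff_subset_union' J' Q) ?_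
          intro e' he' _
          rcases Finset.mem_union.mp he' with h | h
          · exact hc e' (hJ'G e' h)
          · exact hc e' (hQG e' h)
        have h2 : ∑ e' ∈ J' ∪ Q, c e' ≤ ∑ e' ∈ J', c e' + ∑ e' ∈ Q, c e' := by
          have hui := Finset.sum_union_inter (s₁ := J') (s₂ := Q) (f := c)
          have hnn : 0 ≤ ∑ e' ∈ J' ∩ Q, c e' :=
            Finset.sum_nonneg fun e' he' => hc e' (hJ'G e' (Finset.mem_inter.mp he').1)
          linarith
        have h3 : ∑ e' ∈ Q, c e' ≤ (p.edges.map c).sum := by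
          have hsub : Q ⊆ p.edges.toFinset := by
            intro e' he'
            rw [List.mem_toFinset]
            exact p.edges_bypass_subset (List.mem_toFinset.mp he')
          have hs1 : ∑ e' ∈ Q, c e' ≤ ∑ e' ∈ p.edges.toFinset, c e' := by
            refine Finset.sum_le_sum_of_subset_of_nonneg hsub ?_
            intro e' he' _
            exact hc e' (p.edges_subset_edgeSet (List.mem_toFinset.mp he'))
          have hs2 := sum_list_toFinset_le c p.edges
            (fun e' he' => hc e' (p.edges_subset_edgeSet he'))
          linarith
        have h4 : (p.edges.map c).sum < spDist G c s(u, v) + ε / 2 := by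
          rw [spDist]; exact hxlt
        have h5 : ∑ e' ∈ P, spDist G c e' = spDist G c s(u, v) + ∑ e' ∈ P', spDist G c e' := by
          rw [hP'def, ← Finset.add_sum_erase _ _ heP]
        linarith

/-- Edmonds: the minimum cost of a `T`-join of a connected graph `G` equals the
minimum cost of a perfect matching of the complete graph on `T` whose edge costs
are the shortest-path distances in `G`. -/
theorem min_tjoin_eq_min_matching {V : Type} [Fintype V] [DecidableEq V]
    (G : SimpleGraph V) (hG : G.Connected)
    (c : Sym2 V → ℝ) (hc : ∀ e ∈ G.edgeSet, 0 ≤ c e)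
    (T : Finset V) (hT : T.Nonempty) (hTeven : Even T.card) :
    sInf {t | ∃ J : Finset (Sym2 V), IsTJoin G (T : Set V) J ∧ t = ∑ e ∈ J, c e} =
      sInf {t | ∃ P : Finset (Sym2 V), IsPerfectMatchingOn T P ∧
        t = ∑ e ∈ P, spDist G c e} := by
  set A := {t | ∃ J : Finset (Sym2 V), IsTJoin G (T : Set V) J ∧ t = ∑ e ∈ J, c e} with hA
  set B := {t | ∃ P : Finset (Sym2 V), IsPerfectMatchingOn T P ∧
    t = ∑ e ∈ P, spDist G c e} with hB
  have hAbdd : BddBelow A := by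
    refine ⟨0, ?_⟩
    rintro x ⟨J, hJ, rfl⟩
    exact Finset.sum_nonneg fun e he => hc e (hJ.1 he)
  have hBbdd : BddBelow B := by
    refine ⟨0, ?_⟩
    rintro x ⟨P, hP, rfl⟩
    exact Finset.sum_nonneg fun e _ => spDist_nonneg G c hc e
  obtain ⟨P₀, hP₀⟩ := exists_matching T.card T rfl hTeven
  have hBne : B.Nonempty := ⟨_, P₀, hP₀, rfl⟩
  have hAne : A.Nonempty := by
    obtain ⟨J₀, hJ₀, -⟩ := matching_to_tjoin G hG c hc P₀ T hP₀ 1 one_pos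
    exact ⟨_, J₀, hJ₀, rfl⟩
  refine le_antisymm ?_ ?_
  · refine le_csInf hBne ?_
    rintro b ⟨P, hP, rfl⟩
    refine le_of_forall_pos_le_add ?_
    intro ε hε
    obtain ⟨J, hJ, hle⟩ := matching_to_tjoin G hG c hc P T hP ε hε
    exact le_trans (csInf_le hAbdd ⟨J, hJ, rfl⟩) hle
  · refine le_csInf hAne ?_
    rintro a ⟨J, hJ, rfl⟩
    obtain ⟨P, hP, hle⟩ := tjoin_to_matching G c hc J T hJ
    exact le_trans (csInf_le hBbdd ⟨P, hP, rfl⟩) hle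
end
end
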